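/- arXiv:1308.4888 — 6 statements merged into one kernel-verified Lean document; each statement's English description precedes it below -/
import Mathlib

section
/- Let G be a connected graph with first Betti number g and n leaf edges, and let m ≥ 2. The number of assignments of elements of Z/mZ to the edges of G such that at every non-leaf vertex the incident edge labels (with appropriate orientation conventions for trivalent graphs: edge labels around each internal vertex summing to 0 in Z/mZ) sum to 0, with the leaf edge labels fixed to values a_1,...,a_n ∈ Z/mZ, equals m^g if a_1 + ... + a_n = 0 in Z/mZ, and equals 0 otherwise. -/
open Finset

set_option linter.unusedSectionVars false
set_option maxHeartbeats 1000000

namespace Stmt5Aux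

variable {V : Type} [Fintype V] [DecidableEq V] (G : SimpleGraph V) [DecidableRel G.Adj] (m : ℕ)

/-- The group of antisymmetric, adjacency-supported labelings. -/
def S : AddSubgroup (V → V → ZMod m) :=
  { carrier := {ℓ | (∀ v u, ¬ G.Adj v u → ℓ v u = 0) ∧ (∀ v u, ℓ v u = - ℓ u v)},
    zero_mem' := ⟨fun _ _ _ => rfl, fun _ _ => by simp⟩,
    add_mem' := by
      rintro ℓ ℓ' ⟨h1, h2⟩ ⟨h1', h2'⟩
      refine ⟨fun v u h => ?_, fun v u => ?_⟩
      · simp only [Pi.add_apply, h1 v u h, h1' v u h, add_zero]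
      · simp only [Pi.add_apply, h2 v u, h2' v u]; ring,
    neg_mem' := by
      rintro ℓ ⟨h1, h2⟩
      exact ⟨fun v u h => by simp only [Pi.neg_apply, h1 v u h, neg_zero],
        fun v u => by simp only [Pi.neg_apply, h2 v u]⟩ }

/-- The boundary map. -/
def Dhom : S G m →+ (V → ZMod m) where
  toFun ℓ := fun v => ∑ u, (ℓ : V → V → ZMod m) v u
  map_zero' := by funext v; simp
  map_add' := by intro ℓ ℓ'; funext v; simp [Finset.sum_add_distrib]

/-- The total-sum map. -/
def sigmaHom : (V → ZMod m) →+ ZMod m where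
  toFun f := ∑ v, f v
  map_zero' := by simp
  map_add' := by intro f g; simp [Finset.sum_add_distrib]

lemma neighbor_sum_eq (ℓ : S G m) (v : V) :
    ∑ u ∈ G.neighborFinset v, (ℓ : V → V → ZMod m) v u = Dhom G m ℓ v := by
  refine Finset.sum_subset (Finset.subset_univ _) fun u _ hu => ?_
  exact ℓ.2.1 v u (by simpa [SimpleGraph.mem_neighborFinset] using hu)

lemma total_sum (ℓ : S G m) : ∑ v, Dhom G m ℓ v = 0 := by
  show ∑ v, ∑ u, (ℓ : V → V → ZMod m) v u = 0
  rw [← Finset.sum_product']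
  refine Finset.sum_involution (fun p _ => (p.2, p.1)) (fun p _ => ?_) (fun p _ h => ?_)
    (fun p _ => Finset.mem_univ _) (fun p _ => rfl)
  · have := ℓ.2.2 p.1 p.2
    simp [this]
  · intro hp
    apply h
    have h12 : p.1 = p.2 := congrArg Prod.snd hp
    exact ℓ.2.1 p.1 p.2 (by rw [h12]; exact G.irrefl)

lemma edge_flow {v w : V} (h : G.Adj v w) :
    (fun x => (if x = v then (1 : ZMod m) else 0) - (if x = w then 1 else 0)) ∈
      (Dhom G m).range := by
  have hmem : (fun x y => (if x = v ∧ y = w then (1 : ZMod m) else 0)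
      - (if x = w ∧ y = v then 1 else 0)) ∈ S G m := by
    constructor
    · intro x y hadj
      have h1 : ¬ (x = v ∧ y = w) := by rintro ⟨rfl, rfl⟩; exact hadj h
      have h2 : ¬ (x = w ∧ y = v) := by rintro ⟨rfl, rfl⟩; exact hadj h.symm
      simp [h1, h2]
    · intro x y
      rw [neg_sub]
      simp [and_comm]
  refine ⟨⟨_, hmem⟩, ?_⟩
  funext x
  show (∑ y, ((if x = v ∧ y = w then (1 : ZMod m) else 0) - (if x = w ∧ y = v then 1 else 0)))
      = _
  rw [Finset.sum_sub_distrib]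
  congr 1
  · by_cases hx : x = v <;> simp [hx]
  · by_cases hx : x = w <;> simp [hx]

lemma delta_mem_range {v w : V} (h : G.Reachable v w) :
    (fun x => (if x = v then (1 : ZMod m) else 0) - (if x = w then 1 else 0)) ∈
      (Dhom G m).range := by
  obtain ⟨p⟩ := h
  induction p with
  | nil => exact ⟨0, by funext x; simp⟩
  | @cons v v' w hadj p IH =>
      have h2 := (Dhom G m).range.add_mem (edge_flow G m hadj) IH
      convert h2 using 1
      funext x
      simp only [Pi.add_apply]
      ring

lemma range_eq_ker [NeZero m] (hconn : G.Connected) :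
    (Dhom G m).range = (sigmaHom (V := V) m).ker := by
  ext f
  constructor
  · rintro ⟨ℓ, rfl⟩
    exact total_sum G m ℓ
  · intro hf
    have hf : ∑ v, f v = 0 := hf
    have v0 : V := hconn.nonempty.some
    have key : f = ∑ v : V, (f v).val •
        (fun x => (if x = v then (1 : ZMod m) else 0) - (if x = v0 then 1 else 0)) := by
      funext x
      rw [Finset.sum_apply]
      simp only [Pi.smul_apply, smul_sub, nsmul_eq_mul, ZMod.natCast_val, ZMod.cast_id',
        id_eq, mul_ite, mul_one, mul_zero]
      rw [Finset.sum_sub_distrib]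
      rw [Finset.sum_ite_eq univ x f]
      by_cases hx : x = v0 <;> simp [hx, hf]
    rw [key]
    exact AddSubgroup.sum_mem _ fun v _ =>
      AddSubgroup.nsmul_mem _ (delta_mem_range G m (hconn.preconnected v v0)) _

lemma card_S : Nat.card (S G m) = m ^ G.edgeFinset.card := by
  letI : LinearOrder V := LinearOrder.lift' (fun v => (Fintype.equivFin V v : ℕ))
    (fun a b hab => (Fintype.equivFin V).injective (Fin.val_injective hab))
  have hsymm : ∀ (ℓ : V → V → ZMod m), (∀ v u, ℓ v u = - ℓ u v) → ∀ v w : V,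
      (if v ≤ w then ℓ v w else ℓ w v) = (if w ≤ v then ℓ w v else ℓ v w) := by
    intro ℓ hℓ v w
    rcases lt_trichotomy v w with h | h | h
    · rw [if_pos h.le, if_neg (not_le.mpr h)]
    · subst h; simp
    · rw [if_neg (not_le.mpr h), if_pos h.le]
  let e : S G m ≃ (G.edgeFinset → ZMod m) :=
  { toFun := fun ℓ e => Sym2.lift
      ⟨fun v w => if v ≤ w then (ℓ : V → V → ZMod m) v w else (ℓ : V → V → ZMod m) w v,
        hsymm _ ℓ.2.2⟩ e.1
    invFun := fun h => ⟨fun v u => if hadj : G.Adj v u then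
        (if v ≤ u then h ⟨s(v,u), SimpleGraph.mem_edgeFinset.mpr hadj⟩
         else - h ⟨s(v,u), SimpleGraph.mem_edgeFinset.mpr hadj⟩) else 0, by
      constructor
      · intro v u hadj; exact dif_neg hadj
      · intro v u
        by_cases hadj : G.Adj v u
        · have hne : v ≠ u := hadj.ne
          have hswap : (⟨s(u,v), SimpleGraph.mem_edgeFinset.mpr hadj.symm⟩ :
              G.edgeFinset) = ⟨s(v,u), SimpleGraph.mem_edgeFinset.mpr hadj⟩ :=
            Subtype.ext (Sym2.eq_swap)
          beta_reduce
          rw [dif_pos hadj, dif_pos hadj.symm, hswap]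
          rcases lt_or_gt_of_ne hne with h | h
          · rw [if_pos h.le, if_neg (not_le.mpr h), neg_neg]
          · rw [if_neg (not_le.mpr h), if_pos h.le]
        · beta_reduce
          rw [dif_neg hadj, dif_neg (fun h => hadj h.symm), neg_zero]⟩
    left_inv := by
      intro ℓ
      apply Subtype.ext
      funext v u
      show (if hadj : G.Adj v u then _ else _) = _
      by_cases hadj : G.Adj v u
      · rw [dif_pos hadj]
        by_cases hle : v ≤ u
        · rw [if_pos hle]
          show (if v ≤ u then (ℓ : V → V → ZMod m) v u else (ℓ : V → V → ZMod m) u v) = _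
          rw [if_pos hle]
        · rw [if_neg hle]
          show -(if v ≤ u then (ℓ : V → V → ZMod m) v u else (ℓ : V → V → ZMod m) u v) = _
          rw [if_neg hle, ← ℓ.2.2 v u]
      · rw [dif_neg hadj]
        exact (ℓ.2.1 v u hadj).symm
    right_inv := by
      intro h
      funext e
      rcases e with ⟨e, he⟩
      induction e using Sym2.ind with
      | _ v w =>
        have hadj : G.Adj v w := SimpleGraph.mem_edgeFinset.mp he
        show (if v ≤ w then _ else _) = h ⟨s(v,w), he⟩
        by_cases hle : v ≤ w
        · rw [if_pos hle]
          show (if hadj : G.Adj v w then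
              (if v ≤ w then h ⟨s(v,w), SimpleGraph.mem_edgeFinset.mpr hadj⟩
               else - h ⟨s(v,w), SimpleGraph.mem_edgeFinset.mpr hadj⟩) else 0) = _
          rw [dif_pos hadj, if_pos hle]
        · have hle' : w ≤ v := (not_le.mp hle).le
          rw [if_neg hle]
          show (if hadj : G.Adj w v then
              (if w ≤ v then h ⟨s(w,v), SimpleGraph.mem_edgeFinset.mpr hadj⟩
               else - h ⟨s(w,v), SimpleGraph.mem_edgeFinset.mpr hadj⟩) else 0) = _
          rw [dif_pos hadj.symm, if_pos hle']
          exact congrArg h (Subtype.ext Sym2.eq_swap) }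
  rw [Nat.card_congr e, Nat.card_pi]
  simp [Nat.card_zmod]

lemma card_ker_sigma [NeZero m] [Nonempty V] :
    Nat.card ((sigmaHom (V := V) m).ker) * m = m ^ Fintype.card V := by
  have hsurj : Function.Surjective (sigmaHom (V := V) m) := by
    intro c
    refine ⟨Pi.single (Classical.arbitrary V) c, ?_⟩
    show ∑ v, Pi.single (Classical.arbitrary V) c v = c
    simp
  have h1 := AddSubgroup.card_eq_card_quotient_mul_card_addSubgroup
    ((sigmaHom (V := V) m).ker)
  have h2 : Nat.card ((V → ZMod m) ⧸ (sigmaHom (V := V) m).ker) = m := by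
    rw [Nat.card_congr (QuotientAddGroup.quotientKerEquivRange
      (sigmaHom (V := V) m)).toEquiv]
    rw [AddMonoidHom.range_eq_top.mpr hsurj]
    rw [Nat.card_congr AddSubgroup.topEquiv.toEquiv, Nat.card_zmod]
  have h3 : Nat.card (V → ZMod m) = m ^ Fintype.card V := by
    rw [Nat.card_pi]; simp [Nat.card_zmod]
  rw [← h3, h1, h2, mul_comm]

lemma card_ker_D [NeZero m] (hconn : G.Connected)
    (hg : G.edgeFinset.card + 1 = Fintype.card V + g) (hm : 2 ≤ m) :
    Nat.card ((Dhom G m).ker) = m ^ g := by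
  haveI : Nonempty V := hconn.nonempty
  have h1 := AddSubgroup.card_eq_card_quotient_mul_card_addSubgroup ((Dhom G m).ker)
  have h2 : Nat.card ((S G m) ⧸ (Dhom G m).ker) = Nat.card ((sigmaHom (V := V) m).ker) := by
    rw [Nat.card_congr (QuotientAddGroup.quotientKerEquivRange (Dhom G m)).toEquiv,
      range_eq_ker G m hconn]
  rw [card_S, h2] at h1
  have h4 := card_ker_sigma (V := V) m
  -- m ^ (E+1) = m ^ |V| * card ker
  have h5 : m ^ (G.edgeFinset.card + 1) = m ^ Fintype.card V * Nat.card ((Dhom G m).ker) := by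
    rw [pow_succ, h1, ← h4]; ring
  rw [hg, pow_add] at h5
  have hpos : 0 < m ^ Fintype.card V := Nat.pow_pos (by omega)
  exact Nat.eq_of_mul_eq_mul_left hpos h5.symm

end Stmt5Aux

/-- Let `G` be a connected trivalent graph (every vertex of degree 1 or 3) with first
Betti number `g` (i.e. `|E| + 1 = |V| + g`), and `m ≥ 2`.  Labelings assign to each
half-edge (the label `ℓ v u` of edge `vu` at `v`, halves being negatives of each other)
an element of `ℤ/mℤ`, with the three labels around each internal (degree-3) vertex
summing to `0`, and with the leaf half-edge labels fixed to `a`.  The number of such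
labelings is `m^g` if the fixed leaf labels sum to `0`, and `0` otherwise. -/
theorem stmt5 (m g : ℕ) (hm : 2 ≤ m)
    (V : Type) [Fintype V] [DecidableEq V] (G : SimpleGraph V) [DecidableRel G.Adj]
    (hconn : G.Connected)
    (hdeg : ∀ v : V, G.degree v = 1 ∨ G.degree v = 3)
    (hg : G.edgeFinset.card + 1 = Fintype.card V + g)
    (a : V → ZMod m) :
    Nat.card {ℓ : V → V → ZMod m //
        (∀ v u, ¬ G.Adj v u → ℓ v u = 0) ∧
        (∀ v u, ℓ v u = - ℓ u v) ∧
        (∀ v, G.degree v = 3 → ∑ u ∈ G.neighborFinset v, ℓ v u = 0) ∧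
        (∀ v, G.degree v = 1 → ∀ u, G.Adj v u → ℓ v u = a v)} =
      if (∑ v ∈ Finset.univ.filter (fun v => G.degree v = 1), a v) = 0
        then m ^ g else 0 := by
  haveI : NeZero m := ⟨by omega⟩
  classical
  set b : V → ZMod m := fun v => if G.degree v = 1 then a v else 0 with hb
  -- the conditions are equivalent to membership in S and D ℓ = b
  have cond_iff : ∀ ℓ : V → V → ZMod m,
      ((∀ v u, ¬ G.Adj v u → ℓ v u = 0) ∧
        (∀ v u, ℓ v u = - ℓ u v) ∧
        (∀ v, G.degree v = 3 → ∑ u ∈ G.neighborFinset v, ℓ v u = 0) ∧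
        (∀ v, G.degree v = 1 → ∀ u, G.Adj v u → ℓ v u = a v)) ↔
      ∃ h : ℓ ∈ Stmt5Aux.S G m, Stmt5Aux.Dhom G m ⟨ℓ, h⟩ = b := by
    intro ℓ
    constructor
    · rintro ⟨h1, h2, h3, h4⟩
      refine ⟨⟨h1, h2⟩, ?_⟩
      funext v
      rw [← Stmt5Aux.neighbor_sum_eq G m ⟨ℓ, ⟨h1, h2⟩⟩ v]
      rcases hdeg v with hv | hv
      · obtain ⟨u0, hu0⟩ := Finset.card_eq_one.mp (hv : (G.neighborFinset v).card = 1)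
        have hadj : G.Adj v u0 := by
          rw [← SimpleGraph.mem_neighborFinset, hu0]; exact Finset.mem_singleton_self _
        show ∑ u ∈ G.neighborFinset v, ℓ v u = b v
        rw [hu0, Finset.sum_singleton, h4 v hv u0 hadj, hb]
        simp [hv]
      · show ∑ u ∈ G.neighborFinset v, ℓ v u = b v
        rw [h3 v hv, hb]
        have : G.degree v ≠ 1 := by omega
        simp [this]
    · rintro ⟨hmem, hD⟩
      have hD' : ∀ v, ∑ u ∈ G.neighborFinset v, ℓ v u = b v := by
        intro v
        rw [Stmt5Aux.neighbor_sum_eq G m ⟨ℓ, hmem⟩ v]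
        exact congrFun hD v
      refine ⟨hmem.1, hmem.2, fun v hv => ?_, fun v hv u hadj => ?_⟩
      · rw [hD' v, hb]
        have : G.degree v ≠ 1 := by omega
        simp [this]
      · obtain ⟨u0, hu0⟩ := Finset.card_eq_one.mp (hv : (G.neighborFinset v).card = 1)
        have hu : u = u0 := by
          have : u ∈ G.neighborFinset v := (SimpleGraph.mem_neighborFinset _ _ _).mpr hadj
          rw [hu0] at this; exact Finset.mem_singleton.mp this
        have := hD' v
        rw [hu0, Finset.sum_singleton] at this
        rw [hu, this, hb]
        simp [hv]
  have sum_b : ∑ v, b v = ∑ v ∈ Finset.univ.filter (fun v => G.degree v = 1), a v := by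
    rw [hb, ← Finset.sum_filter]
  -- bijection with the fiber of Dhom over b
  let Fib := {p : Stmt5Aux.S G m // Stmt5Aux.Dhom G m p = b}
  have ecard : Nat.card {ℓ : V → V → ZMod m //
      (∀ v u, ¬ G.Adj v u → ℓ v u = 0) ∧
      (∀ v u, ℓ v u = - ℓ u v) ∧
      (∀ v, G.degree v = 3 → ∑ u ∈ G.neighborFinset v, ℓ v u = 0) ∧
      (∀ v, G.degree v = 1 → ∀ u, G.Adj v u → ℓ v u = a v)} = Nat.card Fib := by
    refine Nat.card_congr ⟨fun p => ⟨⟨p.1, ((cond_iff p.1).mp p.2).1⟩,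
        ((cond_iff p.1).mp p.2).2⟩,
      fun q => ⟨q.1.1, (cond_iff q.1.1).mpr ⟨q.1.2, by rw [Subtype.coe_eta]; exact q.2⟩⟩,
      fun p => rfl, fun q => by ext : 2 <;> rfl⟩
  rw [ecard]
  by_cases hsum : (∑ v ∈ Finset.univ.filter (fun v => G.degree v = 1), a v) = 0
  · rw [if_pos hsum]
    -- b is in the range of Dhom
    have hbmem : b ∈ (Stmt5Aux.Dhom G m).range := by
      rw [Stmt5Aux.range_eq_ker G m hconn]
      show ∑ v, b v = 0
      rw [sum_b, hsum]
    obtain ⟨ℓ0, hℓ0⟩ := hbmem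
    have : Nat.card Fib = Nat.card ((Stmt5Aux.Dhom G m).ker) := by
      refine Nat.card_congr ⟨fun p => ⟨p.1 - ℓ0, ?_⟩, fun q => ⟨q.1 + ℓ0, ?_⟩, ?_, ?_⟩
      · rw [AddMonoidHom.mem_ker, map_sub, p.2, hℓ0, sub_self]
      · show Stmt5Aux.Dhom G m (q.1 + ℓ0) = b
        rw [map_add, hℓ0, AddMonoidHom.mem_ker.mp q.2, zero_add]
      · intro p; ext : 2; simp
      · intro q; ext : 2; simp
    rw [this]
    exact Stmt5Aux.card_ker_D (g := g) G m hconn hg hm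
  · rw [if_neg hsum]
    rw [Nat.card_eq_zero]
    left
    refine ⟨fun p => hsum ?_⟩
    rw [← sum_b, ← p.2]
    exact Stmt5Aux.total_sum G m p.1
end

section
/- Let A = Z/mZ. The vertices of the tripod polytope P_{0,3}(Z/mZ) ⊂ R^{3(m−1)} (in the coordinates x^{e}_{[i]} for e ∈ {e_1,e_2,e_3} and i ∈ {1,...,m−1}) are exactly: the zero vector; for each i ∈ {1,...,m−1}, the three vectors with x^{e_a}_{[i]} = x^{e_b}_{[m−i]} = 1 for each of the three pairs {a,b} ⊂ {1,2,3} and all other coordinates zero; and for each triple i,j,k ∈ {1,...,m−1} with i+j+k ≡ 0 (mod m), the vector with x^{e_1}_{[i]} = x^{e_2}_{[j]} = x^{e_3}_{[k]} = 1 and all other coordinates zero. In total there are m^2 vertices. -/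
/-- The vertices of the tripod polytope `P_{0,3}(ℤ/mℤ) ⊂ ℝ^{3(m−1)}` are exactly the
`m^2` points coming from labelings `f` of the three tripod edges by elements of
`ℤ/mℤ` summing to `0` (with coordinate `x^e_{[i]} = 1` iff `f e = [i] ≠ [0]`):
the zero vector, the vectors `x^{e_a}_{[i]} = x^{e_b}_{[m−i]} = 1`, and the vectors
`x^{e_1}_{[i]} = x^{e_2}_{[j]} = x^{e_3}_{[k]} = 1` with `i+j+k ≡ 0 (mod m)`.
Every such point is a vertex (extreme point) of the convex hull, they exhaust the
vertices, and there are `m^2` of them. -/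
theorem stmt7 (m : ℕ) (hm : 2 ≤ m) :
    let pt : (Fin 3 → ZMod m) → (Fin 3 × Fin (m - 1) → ℝ) :=
      fun f p => if f p.1 = (((p.2 : ℕ) + 1 : ℕ) : ZMod m) then 1 else 0
    let S : Set (Fin 3 × Fin (m - 1) → ℝ) :=
      {x | ∃ f : Fin 3 → ZMod m, f 0 + f 1 + f 2 = 0 ∧ x = pt f}
    Set.extremePoints ℝ (convexHull ℝ S) = S ∧ S.ncard = m ^ 2 := by
  intro pt S
  haveI : NeZero m := ⟨by omega⟩
  -- the labels i+1 are nonzero mod m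
  have hcoord : ∀ i : Fin (m - 1), (((i : ℕ) + 1 : ℕ) : ZMod m) ≠ 0 := by
    intro i h
    have hi := i.isLt
    have hdvd := (ZMod.natCast_eq_zero_iff _ m).mp h
    have := Nat.le_of_dvd (by omega) hdvd
    omega
  -- every nonzero element is a label
  have hrep : ∀ c : ZMod m, c ≠ 0 → ∃ i : Fin (m - 1), (((i : ℕ) + 1 : ℕ) : ZMod m) = c := by
    intro c hc
    have hv : c.val ≠ 0 := by simpa [ZMod.val_eq_zero] using hc
    have hlt := c.val_lt
    refine ⟨⟨c.val - 1, by omega⟩, ?_⟩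
    have : (c.val - 1) + 1 = c.val := by omega
    rw [this]
    simp [ZMod.natCast_val, ZMod.cast_id]
  have hpt_inj : Function.Injective pt := by
    intro f g h
    funext e
    have key : ∀ f g : Fin 3 → ZMod m, pt f = pt g → f e ≠ 0 → f e = g e := by
      intro f g h hf
      obtain ⟨i, hi⟩ := hrep (f e) hf
      have h1 : pt f (e, i) = pt g (e, i) := by rw [h]
      simp only [pt, hi.symm] at h1
      by_cases hg : g e = (((i : ℕ) + 1 : ℕ) : ZMod m)
      · rw [hi.symm, hg]
      · push_cast at hg
        simp [hg] at h1
    by_cases hf : f e = 0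
    · by_cases hg : g e = 0
      · rw [hf, hg]
      · exact ((key g f h.symm hg).symm)
    · exact key f g h hf
  constructor
  · -- extreme points
    apply Set.Subset.antisymm
    · exact extremePoints_convexHull_subset
    · intro x hx
      -- x has 0/1 coordinates
      obtain ⟨f, hf, rfl⟩ := hx
      have hx01 : ∀ p, pt f p = 0 ∨ pt f p = 1 := by
        intro p
        simp only [pt]
        split_ifs <;> simp
      -- the hull lies in the box [0,1]^n
      have hbox : convexHull ℝ S ⊆ {y : Fin 3 × Fin (m - 1) → ℝ | ∀ p, y p ∈ Set.Icc (0:ℝ) 1} := by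
        apply convexHull_min
        · rintro y ⟨g, hg, rfl⟩ p
          simp only [pt, Set.mem_Icc]
          split_ifs <;> norm_num
        · have : Convex ℝ (Set.univ.pi fun _ : Fin 3 × Fin (m - 1) => Set.Icc (0:ℝ) 1) :=
            convex_pi fun _ _ => convex_Icc 0 1
          simpa [Set.pi] using this
      refine ⟨subset_convexHull ℝ S ⟨f, hf, rfl⟩, ?_⟩
      rintro x1 hx1 x2 hx2 ⟨a, b, ha, hb, hab, hsum⟩
      have h1 := hbox hx1
      have h2 := hbox hx2
      have heq : x1 = pt f ∧ x2 = pt f := by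
        constructor <;> funext p <;>
        · have e1 := (h1 p).1
          have e2 := (h1 p).2
          have e3 := (h2 p).1
          have e4 := (h2 p).2
          have e5 : a • x1 p + b • x2 p = pt f p := congrFun hsum p
          simp only [smul_eq_mul] at e5
          rcases hx01 p with h | h <;> rw [h] <;> rw [h] at e5 <;> nlinarith
      exact heq.1
  · -- cardinality
    have hS_eq : S = pt '' {f : Fin 3 → ZMod m | f 0 + f 1 + f 2 = 0} := by
      ext x
      simp only [S, Set.mem_setOf_eq, Set.mem_image]
      constructor
      · rintro ⟨f, h1, h2⟩; exact ⟨f, h1, h2.symm⟩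
      · rintro ⟨f, h1, h2⟩; exact ⟨f, h1, h2.symm⟩
    rw [hS_eq, Set.ncard_image_of_injective _ hpt_inj]
    have e : {f : Fin 3 → ZMod m // f 0 + f 1 + f 2 = 0} ≃ ZMod m × ZMod m :=
      { toFun := fun f => (f.1 0, f.1 1)
        invFun := fun p => ⟨![p.1, p.2, -(p.1 + p.2)], by
          simp [Matrix.cons_val_zero, Matrix.cons_val_one]⟩
        left_inv := fun f => by
          apply Subtype.ext
          funext i
          fin_cases i
          · rfl
          · rfl
          · show -(f.1 0 + f.1 1) = f.1 2
            linear_combination -f.2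
        right_inv := fun p => rfl }
    have : {f : Fin 3 → ZMod m | f 0 + f 1 + f 2 = 0}.ncard
        = Nat.card {f : Fin 3 → ZMod m // f 0 + f 1 + f 2 = 0} :=
      (Nat.card_coe_set_eq _).symm
    rw [this, Nat.card_congr e, Nat.card_prod, Nat.card_zmod, sq]
end

section
/- Define the Berenstein–Zelevinsky cone for SL_m(C): let G_m be the set of integer points (a,b,c) with a+b+c = 2m−3, a,b,c ≥ 0, and exactly one of a,b,c odd, and let L_m ⊆ R^{G_m} be the subspace cut out by the hexagon conditions x(ξ_1)+x(ξ_2) = x(ξ'_1)+x(ξ'_2) for all opposite pairs of edges of all hexagons, K_m = L_m ∩ R^{G_m}_{≥0}, BZ(SL_m(C)) = K_m ∩ Z^{G_m}. Then the projection map pr: BZ(SL_m(C)) → Z^{3(m−1)} to boundary weight data is a semigroup homomorphism, and every element of the phylogenetic semigroup R^{pr}_{0,3}(Z/mZ) lies in the image pr(BZ(SL_m(C))). -/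
namespace BZsetup

variable (m : ℕ)

/-- Exactly one of the three coordinates is odd. -/
def oneOdd (p : ℤ × ℤ × ℤ) : Prop :=
  (Odd p.1 ∧ Even p.2.1 ∧ Even p.2.2) ∨ (Even p.1 ∧ Odd p.2.1 ∧ Even p.2.2) ∨
    (Even p.1 ∧ Even p.2.1 ∧ Odd p.2.2)

/-- `G_m`: the integer points `(a,b,c)` with `a+b+c = 2m−3`, `a,b,c ≥ 0`, and exactly
one coordinate odd (the vertices of the hexagons and triangles). -/
def Gset : Set (ℤ × ℤ × ℤ) :=
  {p | p.1 + p.2.1 + p.2.2 = 2 * (m : ℤ) - 3 ∧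
    0 ≤ p.1 ∧ 0 ≤ p.2.1 ∧ 0 ≤ p.2.2 ∧ oneOdd p}

/-- The Berenstein–Zelevinsky semigroup `BZ(SL_m(ℂ))`: nonnegative integer labelings
of `G_m` satisfying, for every hexagon (centered at a point `h` of the triangle with
all coordinates odd), the three conditions `x(ξ₁)+x(ξ₂) = x(ξ'₁)+x(ξ'₂)` for the three
opposite pairs of edges of the hexagon. -/
def BZ : Set ((ℤ × ℤ × ℤ) → ℤ) :=
  {x | (∀ p, p ∉ Gset m → x p = 0) ∧ (∀ p, 0 ≤ x p) ∧
    (∀ h : ℤ × ℤ × ℤ, Odd h.1 → Odd h.2.1 → Odd h.2.2 →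
      0 ≤ h.1 → 0 ≤ h.2.1 → 0 ≤ h.2.2 →
      h.1 + h.2.1 + h.2.2 = 2 * (m : ℤ) - 3 →
      x (h.1 + 1, h.2.1 - 1, h.2.2) + x (h.1 + 1, h.2.1, h.2.2 - 1)
          = x (h.1 - 1, h.2.1 + 1, h.2.2) + x (h.1 - 1, h.2.1, h.2.2 + 1) ∧
      x (h.1 + 1, h.2.1, h.2.2 - 1) + x (h.1, h.2.1 + 1, h.2.2 - 1)
          = x (h.1 - 1, h.2.1, h.2.2 + 1) + x (h.1, h.2.1 - 1, h.2.2 + 1) ∧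
      x (h.1, h.2.1 + 1, h.2.2 - 1) + x (h.1 - 1, h.2.1 + 1, h.2.2)
          = x (h.1, h.2.1 - 1, h.2.2 + 1) + x (h.1 + 1, h.2.1 - 1, h.2.2))}

/-- The projection of a BZ triangle to its boundary weight data
`(λ₁,…,λ_{m−1}; μ₁,…,μ_{m−1}; ν₁,…,ν_{m−1}) ∈ ℤ^{3(m−1)}`, given by pairwise sums of
neighboring boundary labels. -/
def pr (x : (ℤ × ℤ × ℤ) → ℤ) : Fin 3 × Fin (m - 1) → ℤ := fun q =>
  let i : ℤ := ((q.2 : ℕ) : ℤ) + 1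
  if q.1 = 0 then
    x (2 * ((m : ℤ) - i) - 1, 2 * (i - 1), 0) + x (2 * ((m : ℤ) - i) - 2, 2 * i - 1, 0)
  else if q.1 = 1 then
    x (0, 2 * ((m : ℤ) - i) - 1, 2 * (i - 1)) + x (0, 2 * ((m : ℤ) - i) - 2, 2 * i - 1)
  else
    x (2 * (i - 1), 0, 2 * ((m : ℤ) - i) - 1) + x (2 * i - 1, 0, 2 * ((m : ℤ) - i) - 2)

/-- The `m²` vertices of the tripod polytope `P_{0,3}(ℤ/mℤ)`, realized as 0/1 vectors
in `ℤ^{3(m−1)}`: labelings of the three tripod edges by fundamental weights whose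
indices sum to `0 mod m`. -/
def vtx : Set (Fin 3 × Fin (m - 1) → ℤ) :=
  {w | ∃ f : Fin 3 → ZMod m, f 0 + f 1 + f 2 = 0 ∧
    w = fun q => if f q.1 = (((q.2 : ℕ) + 1 : ℕ) : ZMod m) then 1 else 0}

end BZsetup

namespace BZaux
open BZsetup

/-- The explicit 0/1 BZ triangle for a vertex with boundary indices `A, B, C`
summing to `m` (tripod from the hexagon centered at `(2C−1, 2A−1, 2B−1)`). -/
def tri (m : ℕ) (A B C : ℤ) : (ℤ × ℤ × ℤ) → ℤ := fun p =>
  (if p.1 + p.2.1 + p.2.2 = 2 * (m : ℤ) - 3 ∧ 0 ≤ p.1 ∧ 0 ≤ p.2.1 ∧ 0 ≤ p.2.2 ∧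
      p.1 % 2 = 0 ∧ p.2.2 % 2 = 0 ∧ p.2.1 = 2 * A - 1 ∧ p.2.2 ≤ 2 * B - 2 then 1 else 0) +
  (if p.1 + p.2.1 + p.2.2 = 2 * (m : ℤ) - 3 ∧ 0 ≤ p.1 ∧ 0 ≤ p.2.1 ∧ 0 ≤ p.2.2 ∧
      p.1 % 2 = 0 ∧ p.2.1 % 2 = 0 ∧ p.2.2 = 2 * B - 1 ∧ p.1 ≤ 2 * C - 2 then 1 else 0) +
  (if p.1 + p.2.1 + p.2.2 = 2 * (m : ℤ) - 3 ∧ 0 ≤ p.1 ∧ 0 ≤ p.2.1 ∧ 0 ≤ p.2.2 ∧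
      p.2.1 % 2 = 0 ∧ p.2.2 % 2 = 0 ∧ p.1 = 2 * C - 1 ∧ p.2.1 ≤ 2 * A - 2 then 1 else 0)

/-- The explicit 0/1 BZ triangle for a vertex with boundary indices `A, B, C`
summing to `2m` (tripod of the opposite chirality, centered at
`(2m−2A−1, 2m−2B−1, 2m−2C−1)`). -/
def tri2 (m : ℕ) (A B C : ℤ) : (ℤ × ℤ × ℤ) → ℤ := fun p =>
  (if p.1 + p.2.1 + p.2.2 = 2 * (m : ℤ) - 3 ∧ 0 ≤ p.1 ∧ 0 ≤ p.2.1 ∧ 0 ≤ p.2.2 ∧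
      p.2.1 % 2 = 0 ∧ p.2.2 % 2 = 0 ∧ p.1 = 2 * (m : ℤ) - 2 * A - 1 ∧
      p.2.2 ≤ 2 * (m : ℤ) - 2 * C - 2 then 1 else 0) +
  (if p.1 + p.2.1 + p.2.2 = 2 * (m : ℤ) - 3 ∧ 0 ≤ p.1 ∧ 0 ≤ p.2.1 ∧ 0 ≤ p.2.2 ∧
      p.1 % 2 = 0 ∧ p.2.2 % 2 = 0 ∧ p.2.1 = 2 * (m : ℤ) - 2 * B - 1 ∧
      p.1 ≤ 2 * (m : ℤ) - 2 * A - 2 then 1 else 0) +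
  (if p.1 + p.2.1 + p.2.2 = 2 * (m : ℤ) - 3 ∧ 0 ≤ p.1 ∧ 0 ≤ p.2.1 ∧ 0 ≤ p.2.2 ∧
      p.1 % 2 = 0 ∧ p.2.1 % 2 = 0 ∧ p.2.2 = 2 * (m : ℤ) - 2 * C - 1 ∧
      p.2.1 ≤ 2 * (m : ℤ) - 2 * B - 2 then 1 else 0)

lemma tri_oddA (m : ℕ) (A B C a b c : ℤ) (ha : a % 2 = 1) :
    tri m A B C (a, b, c) =
      if a + b + c = 2 * (m : ℤ) - 3 ∧ 0 ≤ a ∧ 0 ≤ b ∧ 0 ≤ c ∧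
        b % 2 = 0 ∧ c % 2 = 0 ∧ a = 2 * C - 1 ∧ b ≤ 2 * A - 2 then 1 else 0 := by
  simp only [tri]; split_ifs <;> omega

lemma tri_oddB (m : ℕ) (A B C a b c : ℤ) (hb : b % 2 = 1) :
    tri m A B C (a, b, c) =
      if a + b + c = 2 * (m : ℤ) - 3 ∧ 0 ≤ a ∧ 0 ≤ b ∧ 0 ≤ c ∧
        a % 2 = 0 ∧ c % 2 = 0 ∧ b = 2 * A - 1 ∧ c ≤ 2 * B - 2 then 1 else 0 := by
  simp only [tri]; split_ifs <;> omega

lemma tri_oddC (m : ℕ) (A B C a b c : ℤ) (hc : c % 2 = 1) :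
    tri m A B C (a, b, c) =
      if a + b + c = 2 * (m : ℤ) - 3 ∧ 0 ≤ a ∧ 0 ≤ b ∧ 0 ≤ c ∧
        a % 2 = 0 ∧ b % 2 = 0 ∧ c = 2 * B - 1 ∧ a ≤ 2 * C - 2 then 1 else 0 := by
  simp only [tri]; split_ifs <;> omega

lemma tri2_oddA (m : ℕ) (A B C a b c : ℤ) (ha : a % 2 = 1) :
    tri2 m A B C (a, b, c) =
      if a + b + c = 2 * (m : ℤ) - 3 ∧ 0 ≤ a ∧ 0 ≤ b ∧ 0 ≤ c ∧
        b % 2 = 0 ∧ c % 2 = 0 ∧ a = 2 * (m : ℤ) - 2 * A - 1 ∧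
        c ≤ 2 * (m : ℤ) - 2 * C - 2 then 1 else 0 := by
  simp only [tri2]; split_ifs <;> omega

lemma tri2_oddB (m : ℕ) (A B C a b c : ℤ) (hb : b % 2 = 1) :
    tri2 m A B C (a, b, c) =
      if a + b + c = 2 * (m : ℤ) - 3 ∧ 0 ≤ a ∧ 0 ≤ b ∧ 0 ≤ c ∧
        a % 2 = 0 ∧ c % 2 = 0 ∧ b = 2 * (m : ℤ) - 2 * B - 1 ∧
        a ≤ 2 * (m : ℤ) - 2 * A - 2 then 1 else 0 := by
  simp only [tri2]; split_ifs <;> omega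

lemma tri2_oddC (m : ℕ) (A B C a b c : ℤ) (hc : c % 2 = 1) :
    tri2 m A B C (a, b, c) =
      if a + b + c = 2 * (m : ℤ) - 3 ∧ 0 ≤ a ∧ 0 ≤ b ∧ 0 ≤ c ∧
        a % 2 = 0 ∧ b % 2 = 0 ∧ c = 2 * (m : ℤ) - 2 * C - 1 ∧
        b ≤ 2 * (m : ℤ) - 2 * B - 2 then 1 else 0 := by
  simp only [tri2]; split_ifs <;> omega

lemma mem_G (m : ℕ) (p : ℤ × ℤ × ℤ) (h1 : p.1 + p.2.1 + p.2.2 = 2 * (m : ℤ) - 3)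
    (h2 : 0 ≤ p.1) (h3 : 0 ≤ p.2.1) (h4 : 0 ≤ p.2.2)
    (h5 : (p.1 % 2 = 1 ∧ p.2.1 % 2 = 0 ∧ p.2.2 % 2 = 0) ∨
      (p.1 % 2 = 0 ∧ p.2.1 % 2 = 1 ∧ p.2.2 % 2 = 0) ∨
      (p.1 % 2 = 0 ∧ p.2.1 % 2 = 0 ∧ p.2.2 % 2 = 1)) : p ∈ Gset m := by
  refine ⟨h1, h2, h3, h4, ?_⟩
  unfold oneOdd
  simp only [Int.odd_iff, Int.even_iff]
  omega

set_option maxHeartbeats 1000000 in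
lemma tri_mem (m : ℕ) (A B C : ℤ) (hA : 0 ≤ A) (hB : 0 ≤ B) (hC : 0 ≤ C)
    (hs : A + B + C = (m : ℤ)) : tri m A B C ∈ BZ m := by
  refine ⟨?_, ?_, ?_⟩
  · intro p hp
    simp only [tri]
    split_ifs with h1 h2 h3 <;>
      first
        | rfl
        | exact absurd (mem_G m p (by omega) (by omega) (by omega) (by omega) (by omega)) hp
  · intro p; simp only [tri]; split_ifs <;> omega
  · rintro ⟨h1, h2, h3⟩ o1 o2 o3 n1 n2 n3 hsum
    simp only [Int.odd_iff] at o1 o2 o3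
    dsimp only at *
    rw [tri_oddC m A B C (h1+1) (h2-1) h3 (by omega),
        tri_oddB m A B C (h1+1) h2 (h3-1) (by omega),
        tri_oddC m A B C (h1-1) (h2+1) h3 (by omega),
        tri_oddB m A B C (h1-1) h2 (h3+1) (by omega),
        tri_oddA m A B C h1 (h2+1) (h3-1) (by omega),
        tri_oddA m A B C h1 (h2-1) (h3+1) (by omega)]
    refine ⟨?_, ?_, ?_⟩ <;> (split_ifs <;> omega)

set_option maxHeartbeats 1000000 in
lemma tri2_mem (m : ℕ) (A B C : ℤ) (hA : 0 ≤ A) (hB : 0 ≤ B) (hC : 0 ≤ C)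
    (hA' : A ≤ (m : ℤ) - 1) (hB' : B ≤ (m : ℤ) - 1) (hC' : C ≤ (m : ℤ) - 1)
    (hs : A + B + C = 2 * (m : ℤ)) : tri2 m A B C ∈ BZ m := by
  refine ⟨?_, ?_, ?_⟩
  · intro p hp
    simp only [tri2]
    split_ifs with h1 h2 h3 <;>
      first
        | rfl
        | exact absurd (mem_G m p (by omega) (by omega) (by omega) (by omega) (by omega)) hp
  · intro p; simp only [tri2]; split_ifs <;> omega
  · rintro ⟨h1, h2, h3⟩ o1 o2 o3 n1 n2 n3 hsum
    simp only [Int.odd_iff] at o1 o2 o3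
    dsimp only at *
    rw [tri2_oddC m A B C (h1+1) (h2-1) h3 (by omega),
        tri2_oddB m A B C (h1+1) h2 (h3-1) (by omega),
        tri2_oddC m A B C (h1-1) (h2+1) h3 (by omega),
        tri2_oddB m A B C (h1-1) h2 (h3+1) (by omega),
        tri2_oddA m A B C h1 (h2+1) (h3-1) (by omega),
        tri2_oddA m A B C h1 (h2-1) (h3+1) (by omega)]
    refine ⟨?_, ?_, ?_⟩ <;> (split_ifs <;> omega)

lemma tri_pr0 (m : ℕ) (A B C : ℤ) (hA : 0 ≤ A) (hB : 0 ≤ B) (hC : 0 ≤ C)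
    (hs : A + B + C = (m : ℤ)) (i : ℤ) (hi1 : 1 ≤ i) (hi2 : i ≤ (m : ℤ) - 1) :
    tri m A B C (2 * ((m : ℤ) - i) - 1, 2 * (i - 1), 0)
      + tri m A B C (2 * ((m : ℤ) - i) - 2, 2 * i - 1, 0)
      = if A = i then 1 else 0 := by
  rw [tri_oddA m A B C _ _ _ (by omega), tri_oddB m A B C _ _ _ (by omega)]
  split_ifs <;> omega

lemma tri_pr1 (m : ℕ) (A B C : ℤ) (hA : 0 ≤ A) (hB : 0 ≤ B) (hC : 0 ≤ C)
    (hs : A + B + C = (m : ℤ)) (i : ℤ) (hi1 : 1 ≤ i) (hi2 : i ≤ (m : ℤ) - 1) :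
    tri m A B C (0, 2 * ((m : ℤ) - i) - 1, 2 * (i - 1))
      + tri m A B C (0, 2 * ((m : ℤ) - i) - 2, 2 * i - 1)
      = if B = i then 1 else 0 := by
  rw [tri_oddB m A B C _ _ _ (by omega), tri_oddC m A B C _ _ _ (by omega)]
  split_ifs <;> omega

lemma tri_pr2 (m : ℕ) (A B C : ℤ) (hA : 0 ≤ A) (hB : 0 ≤ B) (hC : 0 ≤ C)
    (hs : A + B + C = (m : ℤ)) (i : ℤ) (hi1 : 1 ≤ i) (hi2 : i ≤ (m : ℤ) - 1) :
    tri m A B C (2 * (i - 1), 0, 2 * ((m : ℤ) - i) - 1)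
      + tri m A B C (2 * i - 1, 0, 2 * ((m : ℤ) - i) - 2)
      = if C = i then 1 else 0 := by
  rw [tri_oddC m A B C _ _ _ (by omega), tri_oddA m A B C _ _ _ (by omega)]
  split_ifs <;> omega

lemma tri2_pr0 (m : ℕ) (A B C : ℤ) (hA : 0 ≤ A) (hB : 0 ≤ B) (hC : 0 ≤ C)
    (hA' : A ≤ (m : ℤ) - 1) (hB' : B ≤ (m : ℤ) - 1) (hC' : C ≤ (m : ℤ) - 1)
    (hs : A + B + C = 2 * (m : ℤ)) (i : ℤ) (hi1 : 1 ≤ i) (hi2 : i ≤ (m : ℤ) - 1) :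
    tri2 m A B C (2 * ((m : ℤ) - i) - 1, 2 * (i - 1), 0)
      + tri2 m A B C (2 * ((m : ℤ) - i) - 2, 2 * i - 1, 0)
      = if A = i then 1 else 0 := by
  rw [tri2_oddA m A B C _ _ _ (by omega), tri2_oddB m A B C _ _ _ (by omega)]
  split_ifs <;> omega

lemma tri2_pr1 (m : ℕ) (A B C : ℤ) (hA : 0 ≤ A) (hB : 0 ≤ B) (hC : 0 ≤ C)
    (hA' : A ≤ (m : ℤ) - 1) (hB' : B ≤ (m : ℤ) - 1) (hC' : C ≤ (m : ℤ) - 1)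
    (hs : A + B + C = 2 * (m : ℤ)) (i : ℤ) (hi1 : 1 ≤ i) (hi2 : i ≤ (m : ℤ) - 1) :
    tri2 m A B C (0, 2 * ((m : ℤ) - i) - 1, 2 * (i - 1))
      + tri2 m A B C (0, 2 * ((m : ℤ) - i) - 2, 2 * i - 1)
      = if B = i then 1 else 0 := by
  rw [tri2_oddB m A B C _ _ _ (by omega), tri2_oddC m A B C _ _ _ (by omega)]
  split_ifs <;> omega

lemma tri2_pr2 (m : ℕ) (A B C : ℤ) (hA : 0 ≤ A) (hB : 0 ≤ B) (hC : 0 ≤ C)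
    (hA' : A ≤ (m : ℤ) - 1) (hB' : B ≤ (m : ℤ) - 1) (hC' : C ≤ (m : ℤ) - 1)
    (hs : A + B + C = 2 * (m : ℤ)) (i : ℤ) (hi1 : 1 ≤ i) (hi2 : i ≤ (m : ℤ) - 1) :
    tri2 m A B C (2 * (i - 1), 0, 2 * ((m : ℤ) - i) - 1)
      + tri2 m A B C (2 * i - 1, 0, 2 * ((m : ℤ) - i) - 2)
      = if C = i then 1 else 0 := by
  rw [tri2_oddC m A B C _ _ _ (by omega), tri2_oddA m A B C _ _ _ (by omega)]
  split_ifs <;> omega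

lemma BZ_zero (m : ℕ) : (0 : (ℤ × ℤ × ℤ) → ℤ) ∈ BZ m := by
  refine ⟨fun p _ => rfl, fun p => le_refl 0, fun h _ _ _ _ _ _ _ => by simp⟩

lemma BZ_add (m : ℕ) {x y : (ℤ × ℤ × ℤ) → ℤ} (hx : x ∈ BZ m) (hy : y ∈ BZ m) :
    x + y ∈ BZ m := by
  obtain ⟨hx1, hx2, hx3⟩ := hx
  obtain ⟨hy1, hy2, hy3⟩ := hy
  refine ⟨fun p hp => by simp [hx1 p hp, hy1 p hp], fun p => by
    simpa using add_nonneg (hx2 p) (hy2 p), ?_⟩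
  intro h o1 o2 o3 n1 n2 n3 hs
  obtain ⟨a1, a2, a3⟩ := hx3 h o1 o2 o3 n1 n2 n3 hs
  obtain ⟨b1, b2, b3⟩ := hy3 h o1 o2 o3 n1 n2 n3 hs
  refine ⟨?_, ?_, ?_⟩ <;> simp only [Pi.add_apply] <;> omega

lemma zmod_eq_cast_iff (m : ℕ) [NeZero m] (a : ZMod m) (k : ℕ) (hk : k < m) :
    a = (k : ZMod m) ↔ a.val = k := by
  constructor
  · rintro rfl; exact ZMod.val_cast_of_lt hk
  · intro h; rw [← h]; exact (ZMod.natCast_rightInverse a).symm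

end BZaux

open BZsetup BZaux in
/-- The boundary projection `pr : BZ(SL_m(ℂ)) → ℤ^{3(m−1)}` is a semigroup
homomorphism, and every element of the phylogenetic semigroup `R^{pr}_{0,3}(ℤ/mℤ)`
(generated by the `m²` vertices of `P_{0,3}(ℤ/mℤ)`) lies in the image
`pr(BZ(SL_m(ℂ)))`. -/
theorem stmt15 (m : ℕ) (hm : 2 ≤ m) :
    (∀ x y : (ℤ × ℤ × ℤ) → ℤ, pr m (x + y) = pr m x + pr m y) ∧
    ∀ u ∈ AddSubmonoid.closure (vtx m), ∃ x ∈ BZ m, pr m x = u := by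
  have hadd : ∀ x y : (ℤ × ℤ × ℤ) → ℤ, pr m (x + y) = pr m x + pr m y := by
    intro x y
    funext q
    simp only [pr, Pi.add_apply]
    split_ifs <;> ring
  refine ⟨hadd, ?_⟩
  intro u hu
  haveI : NeZero m := ⟨by omega⟩
  induction hu using AddSubmonoid.closure_induction with
  | mem w hw =>
    obtain ⟨f, hf, rfl⟩ := hw
    have hv0 : (f 0).val < m := ZMod.val_lt (f 0)
    have hv1 : (f 1).val < m := ZMod.val_lt (f 1)
    have hv2 : (f 2).val < m := ZMod.val_lt (f 2)
    have hdvd : m ∣ (f 0).val + (f 1).val + (f 2).val := by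
      rw [← ZMod.natCast_eq_zero_iff]
      push_cast
      rw [ZMod.natCast_rightInverse (f 0), ZMod.natCast_rightInverse (f 1),
        ZMod.natCast_rightInverse (f 2)]
      exact hf
    have hiq : ∀ (j : Fin 3) (k : ℕ), k < m →
        ((if f j = (k : ZMod m) then (1 : ℤ) else 0) =
          if ((f j).val : ℤ) = (k : ℤ) then 1 else 0) := by
      intro j k hk
      rw [if_congr (zmod_eq_cast_iff m (f j) k hk) rfl rfl]
      split_ifs <;> omega
    have hcase : (f 0).val + (f 1).val + (f 2).val = 0 ∨
        (f 0).val + (f 1).val + (f 2).val = m ∨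
        (f 0).val + (f 1).val + (f 2).val = 2 * m := by
      obtain ⟨k, hk⟩ := hdvd
      have hk3 : k < 3 := by
        by_contra hc
        push_neg at hc
        have : m * 3 ≤ m * k := Nat.mul_le_mul_left m hc
        omega
      interval_cases k <;> omega
    rcases hcase with h | h | h
    · -- the zero vertex
      refine ⟨0, BZ_zero m, ?_⟩
      funext q
      obtain ⟨q1, q2⟩ := q
      have hk : (q2 : ℕ) + 1 < m := by have := q2.isLt; omega
      have hq1 : q1 = 0 ∨ q1 = 1 ∨ q1 = 2 := by fin_cases q1 <;> decide
      have hval : (f q1).val = 0 := by rcases hq1 with rfl | rfl | rfl <;> omega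
      have hne : ¬(((f q1).val : ℤ) = ((((q2 : ℕ) + 1 : ℕ)) : ℤ)) := by push_cast; omega
      simp only [pr, Pi.zero_apply]
      rw [hiq q1 ((q2 : ℕ) + 1) hk, if_neg hne]
      split_ifs <;> rfl
    · -- sum = m : use `tri`
      have hsZ : ((f 0).val : ℤ) + ((f 1).val : ℤ) + ((f 2).val : ℤ) = (m : ℤ) := by omega
      refine ⟨tri m ((f 0).val) ((f 1).val) ((f 2).val),
        tri_mem m _ _ _ (by positivity) (by positivity) (by positivity) hsZ, ?_⟩
      funext q
      obtain ⟨q1, q2⟩ := q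
      have hk : (q2 : ℕ) + 1 < m := by have := q2.isLt; omega
      have hi1 : (1 : ℤ) ≤ ((q2 : ℕ) : ℤ) + 1 := by omega
      have hi2 : ((q2 : ℕ) : ℤ) + 1 ≤ (m : ℤ) - 1 := by have := q2.isLt; omega
      have hq1 : q1 = 0 ∨ q1 = 1 ∨ q1 = 2 := by fin_cases q1 <;> decide
      rcases hq1 with rfl | rfl | rfl <;>
          simp only [pr, reduceIte] <;>
          rw [hiq _ ((q2 : ℕ) + 1) hk]
      · rw [tri_pr0 m _ _ _ (by positivity) (by positivity) (by positivity) hsZ _ hi1 hi2]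
        push_cast
        split_ifs <;> omega
      · rw [tri_pr1 m _ _ _ (by positivity) (by positivity) (by positivity) hsZ _ hi1 hi2]
        push_cast
        split_ifs <;> omega
      · rw [tri_pr2 m _ _ _ (by positivity) (by positivity) (by positivity) hsZ _ hi1 hi2]
        push_cast
        split_ifs <;> omega
    · -- sum = 2m : use `tri2`
      have hsZ : ((f 0).val : ℤ) + ((f 1).val : ℤ) + ((f 2).val : ℤ) = 2 * (m : ℤ) := by
        omega
      have hA' : ((f 0).val : ℤ) ≤ (m : ℤ) - 1 := by omega
      have hB' : ((f 1).val : ℤ) ≤ (m : ℤ) - 1 := by omega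
      have hC' : ((f 2).val : ℤ) ≤ (m : ℤ) - 1 := by omega
      refine ⟨tri2 m ((f 0).val) ((f 1).val) ((f 2).val),
        tri2_mem m _ _ _ (by positivity) (by positivity) (by positivity) hA' hB' hC' hsZ, ?_⟩
      funext q
      obtain ⟨q1, q2⟩ := q
      have hk : (q2 : ℕ) + 1 < m := by have := q2.isLt; omega
      have hi1 : (1 : ℤ) ≤ ((q2 : ℕ) : ℤ) + 1 := by omega
      have hi2 : ((q2 : ℕ) : ℤ) + 1 ≤ (m : ℤ) - 1 := by have := q2.isLt; omega
      have hq1 : q1 = 0 ∨ q1 = 1 ∨ q1 = 2 := by fin_cases q1 <;> decide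
      rcases hq1 with rfl | rfl | rfl <;>
          simp only [pr, reduceIte] <;>
          rw [hiq _ ((q2 : ℕ) + 1) hk]
      · rw [tri2_pr0 m _ _ _ (by positivity) (by positivity) (by positivity)
          hA' hB' hC' hsZ _ hi1 hi2]
        push_cast
        split_ifs <;> omega
      · rw [tri2_pr1 m _ _ _ (by positivity) (by positivity) (by positivity)
          hA' hB' hC' hsZ _ hi1 hi2]
        push_cast
        split_ifs <;> omega
      · rw [tri2_pr2 m _ _ _ (by positivity) (by positivity) (by positivity)
          hA' hB' hC' hsZ _ hi1 hi2]
        push_cast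
        split_ifs <;> omega
  | zero => exact ⟨0, BZ_zero m, by funext q; simp only [pr, Pi.zero_apply]; split_ifs <;> rfl⟩
  | add x y hx hy ihx ihy =>
    obtain ⟨x', hx', hpx⟩ := ihx
    obtain ⟨y', hy', hpy⟩ := ihy
    exact ⟨x' + y', BZ_add m hx' hy', by rw [hadd, hpx, hpy]⟩
end

section
/- For m = 4 (and generally m > 3), the inclusion R^{pr}_{0,3}(Z/mZ) ⊆ pr(BZ(SL_m(C))) is strict: the vector (1,0,...,0,1; 0,1,0,...,0; 0,...,0,1,0) ∈ Z^{3(m−1)} lies in pr(BZ(SL_m(C))) (it is the projection of an explicit 0/1 BZ triangle) but does not lie in R^{pr}_{0,3}(Z/mZ). -/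
set_option maxHeartbeats 1000000
section Aux
open BZsetup


/-- The support condition of the explicit BZ triangle. -/
def myC (m : ℕ) (p q r : ℤ) : Prop :=
  (p = 1 ∧ q = 2 * (m : ℤ) - 4 ∧ r = 0) ∨ (p = 2 * (m : ℤ) - 4 ∧ q = 1 ∧ r = 0) ∨
    (p = 0 ∧ q = 2 * (m : ℤ) - 5 ∧ r = 2) ∨ (p = 2 * (m : ℤ) - 5 ∧ q = 0 ∧ r = 2) ∨
    (r = 1 ∧ p % 2 = 0 ∧ 2 ≤ p ∧ p ≤ 2 * (m : ℤ) - 6 ∧ q = 2 * (m : ℤ) - 4 - p)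

instance (m : ℕ) (p q r : ℤ) : Decidable (myC m p q r) := by unfold myC; infer_instance

/-- The explicit BZ triangle. -/
def myx (m : ℕ) : (ℤ × ℤ × ℤ) → ℤ := fun p =>
  if myC m p.1 p.2.1 p.2.2 then 1 else 0

theorem myx_char (m : ℕ) (p q r : ℤ) :
    (myx m (p, q, r) = 1 ∧ myC m p q r) ∨ (myx m (p, q, r) = 0 ∧ ¬ myC m p q r) := by
  rw [myx]
  by_cases h : myC m p q r
  · exact Or.inl ⟨if_pos h, h⟩
  · exact Or.inr ⟨if_neg h, h⟩


theorem myx_charA (m : ℕ) (p q r : ℤ) (hp : p % 2 = 1) (hq : q % 2 = 0) (hr : r % 2 = 0) :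
    (myx m (p, q, r) = 1 ∧ ((p = 1 ∧ q = 2 * (m : ℤ) - 4 ∧ r = 0) ∨
        (p = 2 * (m : ℤ) - 5 ∧ q = 0 ∧ r = 2))) ∨
    (myx m (p, q, r) = 0 ∧ ¬((p = 1 ∧ q = 2 * (m : ℤ) - 4 ∧ r = 0) ∨
        (p = 2 * (m : ℤ) - 5 ∧ q = 0 ∧ r = 2))) := by
  obtain ⟨v, hv⟩ : ∃ v, myx m (p, q, r) = v := ⟨_, rfl⟩
  have hc := myx_char m p q r
  rw [hv] at hc ⊢
  unfold myC at hc
  omega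

theorem myx_charB (m : ℕ) (p q r : ℤ) (hp : p % 2 = 0) (hq : q % 2 = 1) (hr : r % 2 = 0) :
    (myx m (p, q, r) = 1 ∧ ((p = 2 * (m : ℤ) - 4 ∧ q = 1 ∧ r = 0) ∨
        (p = 0 ∧ q = 2 * (m : ℤ) - 5 ∧ r = 2))) ∨
    (myx m (p, q, r) = 0 ∧ ¬((p = 2 * (m : ℤ) - 4 ∧ q = 1 ∧ r = 0) ∨
        (p = 0 ∧ q = 2 * (m : ℤ) - 5 ∧ r = 2))) := by
  obtain ⟨v, hv⟩ : ∃ v, myx m (p, q, r) = v := ⟨_, rfl⟩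
  have hc := myx_char m p q r
  rw [hv] at hc ⊢
  unfold myC at hc
  omega

theorem myx_charC (m : ℕ) (p q r : ℤ) (hp : p % 2 = 0) (hq : q % 2 = 0) (hr : r % 2 = 1) :
    (myx m (p, q, r) = 1 ∧ (r = 1 ∧ 2 ≤ p ∧ p ≤ 2 * (m : ℤ) - 6 ∧ q = 2 * (m : ℤ) - 4 - p)) ∨
    (myx m (p, q, r) = 0 ∧ ¬(r = 1 ∧ 2 ≤ p ∧ p ≤ 2 * (m : ℤ) - 6 ∧ q = 2 * (m : ℤ) - 4 - p)) := by
  obtain ⟨v, hv⟩ : ∃ v, myx m (p, q, r) = v := ⟨_, rfl⟩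
  have hc := myx_char m p q r
  rw [hv] at hc ⊢
  unfold myC at hc
  omega


theorem myx_mem (m : ℕ) (hm : 3 < m) : myx m ∈ BZ m := by
  refine ⟨?_, ?_, ?_⟩
  · intro p hp
    rcases myx_char m p.1 p.2.1 p.2.2 with ⟨h1, h2⟩ | ⟨h1, h2⟩
    · exfalso
      apply hp
      simp only [Gset, oneOdd, Set.mem_setOf_eq, Int.odd_iff, Int.even_iff]
      unfold myC at h2
      omega
    · exact h1
  · intro p
    rcases myx_char m p.1 p.2.1 p.2.2 with ⟨h1, _⟩ | ⟨h1, _⟩ <;> rw [h1] <;> norm_num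
  · intro h h1 h2 h3 hn1 hn2 hn3 hs
    rw [Int.odd_iff] at h1 h2 h3
    refine ⟨?_, ?_, ?_⟩
    · have cA := myx_charC m (h.1 + 1) (h.2.1 - 1) h.2.2 (by omega) (by omega) (by omega)
      have eA : (myx m (h.1 + 1, h.2.1 - 1, h.2.2) = 1 ∧ h.2.2 = 1 ∧ h.1 ≤ 2 * (m : ℤ) - 7) ∨
          (myx m (h.1 + 1, h.2.1 - 1, h.2.2) = 0 ∧ ¬(h.2.2 = 1 ∧ h.1 ≤ 2 * (m : ℤ) - 7)) := by
        omega
      clear cA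
      have cB := myx_charB m (h.1 + 1) h.2.1 (h.2.2 - 1) (by omega) (by omega) (by omega)
      have eB : (myx m (h.1 + 1, h.2.1, h.2.2 - 1) = 1 ∧ h.1 = 2 * (m : ℤ) - 5 ∧ h.2.2 = 1) ∨
          (myx m (h.1 + 1, h.2.1, h.2.2 - 1) = 0 ∧ ¬(h.1 = 2 * (m : ℤ) - 5 ∧ h.2.2 = 1)) := by
        omega
      clear cB
      have cC := myx_charC m (h.1 - 1) (h.2.1 + 1) h.2.2 (by omega) (by omega) (by omega)
      have eC : (myx m (h.1 - 1, h.2.1 + 1, h.2.2) = 1 ∧ h.2.2 = 1 ∧ 3 ≤ h.1) ∨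
          (myx m (h.1 - 1, h.2.1 + 1, h.2.2) = 0 ∧ ¬(h.2.2 = 1 ∧ 3 ≤ h.1)) := by
        omega
      clear cC
      have cD := myx_charB m (h.1 - 1) h.2.1 (h.2.2 + 1) (by omega) (by omega) (by omega)
      have eD : (myx m (h.1 - 1, h.2.1, h.2.2 + 1) = 1 ∧ h.1 = 1 ∧ h.2.2 = 1) ∨
          (myx m (h.1 - 1, h.2.1, h.2.2 + 1) = 0 ∧ ¬(h.1 = 1 ∧ h.2.2 = 1)) := by
        omega
      clear cD
      omega
    · have cA := myx_charB m (h.1 + 1) h.2.1 (h.2.2 - 1) (by omega) (by omega) (by omega)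
      have eA : (myx m (h.1 + 1, h.2.1, h.2.2 - 1) = 1 ∧ h.1 = 2 * (m : ℤ) - 5 ∧ h.2.2 = 1) ∨
          (myx m (h.1 + 1, h.2.1, h.2.2 - 1) = 0 ∧ ¬(h.1 = 2 * (m : ℤ) - 5 ∧ h.2.2 = 1)) := by
        omega
      clear cA
      have cB := myx_charA m h.1 (h.2.1 + 1) (h.2.2 - 1) (by omega) (by omega) (by omega)
      have eB : (myx m (h.1, h.2.1 + 1, h.2.2 - 1) = 1 ∧ h.1 = 1 ∧ h.2.2 = 1) ∨
          (myx m (h.1, h.2.1 + 1, h.2.2 - 1) = 0 ∧ ¬(h.1 = 1 ∧ h.2.2 = 1)) := by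
        omega
      clear cB
      have cC := myx_charB m (h.1 - 1) h.2.1 (h.2.2 + 1) (by omega) (by omega) (by omega)
      have eC : (myx m (h.1 - 1, h.2.1, h.2.2 + 1) = 1 ∧ h.1 = 1 ∧ h.2.2 = 1) ∨
          (myx m (h.1 - 1, h.2.1, h.2.2 + 1) = 0 ∧ ¬(h.1 = 1 ∧ h.2.2 = 1)) := by
        omega
      clear cC
      have cD := myx_charA m h.1 (h.2.1 - 1) (h.2.2 + 1) (by omega) (by omega) (by omega)
      have eD : (myx m (h.1, h.2.1 - 1, h.2.2 + 1) = 1 ∧ h.1 = 2 * (m : ℤ) - 5 ∧ h.2.2 = 1) ∨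
          (myx m (h.1, h.2.1 - 1, h.2.2 + 1) = 0 ∧ ¬(h.1 = 2 * (m : ℤ) - 5 ∧ h.2.2 = 1)) := by
        omega
      clear cD
      omega
    · have cA := myx_charA m h.1 (h.2.1 + 1) (h.2.2 - 1) (by omega) (by omega) (by omega)
      have eA : (myx m (h.1, h.2.1 + 1, h.2.2 - 1) = 1 ∧ h.1 = 1 ∧ h.2.2 = 1) ∨
          (myx m (h.1, h.2.1 + 1, h.2.2 - 1) = 0 ∧ ¬(h.1 = 1 ∧ h.2.2 = 1)) := by
        omega
      clear cA
      have cB := myx_charC m (h.1 - 1) (h.2.1 + 1) h.2.2 (by omega) (by omega) (by omega)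
      have eB : (myx m (h.1 - 1, h.2.1 + 1, h.2.2) = 1 ∧ h.2.2 = 1 ∧ 3 ≤ h.1) ∨
          (myx m (h.1 - 1, h.2.1 + 1, h.2.2) = 0 ∧ ¬(h.2.2 = 1 ∧ 3 ≤ h.1)) := by
        omega
      clear cB
      have cC := myx_charA m h.1 (h.2.1 - 1) (h.2.2 + 1) (by omega) (by omega) (by omega)
      have eC : (myx m (h.1, h.2.1 - 1, h.2.2 + 1) = 1 ∧ h.1 = 2 * (m : ℤ) - 5 ∧ h.2.2 = 1) ∨
          (myx m (h.1, h.2.1 - 1, h.2.2 + 1) = 0 ∧ ¬(h.1 = 2 * (m : ℤ) - 5 ∧ h.2.2 = 1)) := by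
        omega
      clear cC
      have cD := myx_charC m (h.1 + 1) (h.2.1 - 1) h.2.2 (by omega) (by omega) (by omega)
      have eD : (myx m (h.1 + 1, h.2.1 - 1, h.2.2) = 1 ∧ h.2.2 = 1 ∧ h.1 ≤ 2 * (m : ℤ) - 7) ∨
          (myx m (h.1 + 1, h.2.1 - 1, h.2.2) = 0 ∧ ¬(h.2.2 = 1 ∧ h.1 ≤ 2 * (m : ℤ) - 7)) := by
        omega
      clear cD
      omega

theorem myx_pr (m : ℕ) (hm : 3 < m) :
    pr m (myx m) = fun q : Fin 3 × Fin (m - 1) =>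
      if (q.1 = 0 ∧ ((q.2 : ℕ) = 0 ∨ (q.2 : ℕ) = m - 2)) ∨
          (q.1 = 1 ∧ (q.2 : ℕ) = 1) ∨ (q.1 = 2 ∧ (q.2 : ℕ) = m - 3)
        then 1 else 0 := by
  funext q
  obtain ⟨b, j⟩ := q
  have hj : (j : ℕ) < m - 1 := j.isLt
  fin_cases b
  · have cA := myx_charA m (2 * ((m : ℤ) - (((j : ℕ) : ℤ) + 1)) - 1) (2 * ((j : ℕ) : ℤ)) 0
      (by omega) (by omega) (by omega)
    have eA : (myx m (2 * ((m : ℤ) - (((j : ℕ) : ℤ) + 1)) - 1, 2 * ((j : ℕ) : ℤ), 0) = 1 ∧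
          (j : ℕ) = m - 2) ∨
        (myx m (2 * ((m : ℤ) - (((j : ℕ) : ℤ) + 1)) - 1, 2 * ((j : ℕ) : ℤ), 0) = 0 ∧
          ¬((j : ℕ) = m - 2)) := by
      omega
    clear cA
    have cB := myx_charB m (2 * ((m : ℤ) - (((j : ℕ) : ℤ) + 1)) - 2) (2 * (((j : ℕ) : ℤ) + 1) - 1) 0
      (by omega) (by omega) (by omega)
    have eB : (myx m (2 * ((m : ℤ) - (((j : ℕ) : ℤ) + 1)) - 2, 2 * (((j : ℕ) : ℤ) + 1) - 1, 0) = 1 ∧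
          (j : ℕ) = 0) ∨
        (myx m (2 * ((m : ℤ) - (((j : ℕ) : ℤ) + 1)) - 2, 2 * (((j : ℕ) : ℤ) + 1) - 1, 0) = 0 ∧
          ¬((j : ℕ) = 0)) := by
      omega
    clear cB
    simp only [pr]
    norm_num [Fin.ext_iff]
    split_ifs <;> omega
  · have cA := myx_charB m 0 (2 * ((m : ℤ) - (((j : ℕ) : ℤ) + 1)) - 1) (2 * ((j : ℕ) : ℤ))
      (by omega) (by omega) (by omega)
    have eA : (myx m (0, 2 * ((m : ℤ) - (((j : ℕ) : ℤ) + 1)) - 1, 2 * ((j : ℕ) : ℤ)) = 1 ∧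
          (j : ℕ) = 1) ∨
        (myx m (0, 2 * ((m : ℤ) - (((j : ℕ) : ℤ) + 1)) - 1, 2 * ((j : ℕ) : ℤ)) = 0 ∧
          ¬((j : ℕ) = 1)) := by
      omega
    clear cA
    have cB := myx_charC m 0 (2 * ((m : ℤ) - (((j : ℕ) : ℤ) + 1)) - 2) (2 * (((j : ℕ) : ℤ) + 1) - 1)
      (by omega) (by omega) (by omega)
    have eB : myx m (0, 2 * ((m : ℤ) - (((j : ℕ) : ℤ) + 1)) - 2, 2 * (((j : ℕ) : ℤ) + 1) - 1)
        = 0 := by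
      omega
    clear cB
    simp only [pr]
    norm_num [Fin.ext_iff]
    split_ifs <;> omega
  · have cA := myx_charC m (2 * ((j : ℕ) : ℤ)) 0 (2 * ((m : ℤ) - (((j : ℕ) : ℤ) + 1)) - 1)
      (by omega) (by omega) (by omega)
    have eA : myx m (2 * ((j : ℕ) : ℤ), 0, 2 * ((m : ℤ) - (((j : ℕ) : ℤ) + 1)) - 1) = 0 := by
      omega
    clear cA
    have cB := myx_charA m (2 * (((j : ℕ) : ℤ) + 1) - 1) 0 (2 * ((m : ℤ) - (((j : ℕ) : ℤ) + 1)) - 2)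
      (by omega) (by omega) (by omega)
    have eB : (myx m (2 * (((j : ℕ) : ℤ) + 1) - 1, 0, 2 * ((m : ℤ) - (((j : ℕ) : ℤ) + 1)) - 2) = 1 ∧
          (j : ℕ) = m - 3) ∨
        (myx m (2 * (((j : ℕ) : ℤ) + 1) - 1, 0, 2 * ((m : ℤ) - (((j : ℕ) : ℤ) + 1)) - 2) = 0 ∧
          ¬((j : ℕ) = m - 3)) := by
      omega
    clear cB
    simp only [pr]
    norm_num [Fin.ext_iff]
    split_ifs <;> omega


def pe0 (m : ℕ) (i : ℕ) : ℤ := if i = 0 then 0 else if i = 1 ∨ i = m - 1 then -1 else 2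
def pe1 (i : ℕ) : ℤ := if i = 0 ∨ i = 2 then 0 else 1
def pe2 (m : ℕ) (i : ℕ) : ℤ := if i = 0 ∨ i = m - 2 then 0 else 1

def pen (m : ℕ) : Fin 3 × Fin (m - 1) → ℤ := fun q =>
  if q.1 = 0 then pe0 m ((q.2 : ℕ) + 1)
  else if q.1 = 1 then pe1 ((q.2 : ℕ) + 1)
  else pe2 m ((q.2 : ℕ) + 1)

def Lf (m : ℕ) (v : Fin 3 × Fin (m - 1) → ℤ) : ℤ := ∑ q, pen m q * v q

theorem Lf_add (m : ℕ) (v u : Fin 3 × Fin (m - 1) → ℤ) :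
    Lf m (v + u) = Lf m v + Lf m u := by
  simp [Lf, mul_add, Finset.sum_add_distrib]

theorem Lf_zero (m : ℕ) : Lf m 0 = 0 := by simp [Lf]

theorem inner_zero (m : ℕ) (hm : 3 < m) (g : Fin (m - 1) → ℤ) :
    ∑ j : Fin (m - 1), (if (0 : ZMod m) = (((j : ℕ) + 1 : ℕ) : ZMod m) then g j else 0) = 0 := by
  apply Finset.sum_eq_zero
  intro j _
  rw [if_neg]
  intro hc
  have hdvd := (ZMod.natCast_eq_zero_iff ((j : ℕ) + 1) m).mp hc.symm
  have hjl := j.isLt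
  have := Nat.le_of_dvd (by omega) hdvd
  omega

theorem inner_ne (m : ℕ) (hm : 3 < m) (a : ZMod m) (ha : a ≠ 0) (g : Fin (m - 1) → ℤ)
    (j0 : Fin (m - 1)) (hj0 : (j0 : ℕ) + 1 = a.val) :
    ∑ j : Fin (m - 1), (if a = (((j : ℕ) + 1 : ℕ) : ZMod m) then g j else 0) = g j0 := by
  haveI : NeZero m := ⟨by omega⟩
  rw [Finset.sum_eq_single j0]
  · rw [if_pos]
    rw [hj0, ZMod.natCast_zmod_val]
  · intro j _ hne
    rw [if_neg]
    intro hcontra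
    apply hne
    have hv : (((j : ℕ) + 1 : ℕ) : ZMod m).val = (j : ℕ) + 1 :=
      ZMod.val_cast_of_lt (by have := j.isLt; omega)
    have hva : a.val = (j : ℕ) + 1 := by rw [hcontra, hv]
    exact Fin.ext (by omega)
  · intro hj
    exact absurd (Finset.mem_univ j0) hj

theorem sum_eval (m : ℕ) (hm : 3 < m) (a : ZMod m) (e : ℕ → ℤ) (he : e 0 = 0) :
    ∑ j : Fin (m - 1), (if a = (((j : ℕ) + 1 : ℕ) : ZMod m) then e ((j : ℕ) + 1) else 0)
      = e a.val := by
  haveI : NeZero m := ⟨by omega⟩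
  by_cases ha : a = 0
  · subst ha
    rw [inner_zero m hm, ZMod.val_zero, he]
  · have h0 : a.val ≠ 0 := fun h => ha ((ZMod.val_eq_zero a).mp h)
    have hlt : a.val < m := ZMod.val_lt a
    rw [inner_ne m hm a ha _ ⟨a.val - 1, by omega⟩ (by simp only [Fin.val_mk]; omega)]
    simp only [Fin.val_mk]
    congr 1
    omega

theorem key (m : ℕ) (hm : 3 < m) (v0 v1 v2 : ℕ) (h0 : v0 < m) (h1 : v1 < m) (h2 : v2 < m)
    (hd : m ∣ v0 + v1 + v2) : 0 ≤ pe0 m v0 + pe1 v1 + pe2 m v2 := by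
  unfold pe0 pe1 pe2
  obtain ⟨k, hk⟩ := hd
  have hk3 : k < 3 := by
    by_contra hc
    push_neg at hc
    have : m * 3 ≤ m * k := Nat.mul_le_mul_left m hc
    omega
  interval_cases k <;> split_ifs <;> omega

theorem gen_nonneg (m : ℕ) (hm : 3 < m) (v : Fin 3 × Fin (m - 1) → ℤ) (hv : v ∈ vtx m) :
    0 ≤ Lf m v := by
  haveI : NeZero m := ⟨by omega⟩
  obtain ⟨f, hsum, rfl⟩ := hv
  have p0 : ∀ j : Fin (m - 1), pen m (0, j) = pe0 m ((j : ℕ) + 1) := fun j => rfl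
  have p1 : ∀ j : Fin (m - 1), pen m (1, j) = pe1 ((j : ℕ) + 1) := fun j => rfl
  have p2 : ∀ j : Fin (m - 1), pen m (2, j) = pe2 m ((j : ℕ) + 1) := fun j => rfl
  rw [Lf, Fintype.sum_prod_type, Fin.sum_univ_three]
  simp only [p0, p1, p2, mul_ite, mul_one, mul_zero]
  rw [sum_eval m hm (f 0) (pe0 m) (by norm_num [pe0]),
    sum_eval m hm (f 1) pe1 (by norm_num [pe1]),
    sum_eval m hm (f 2) (pe2 m) (by norm_num [pe2])]
  apply key m hm _ _ _ (ZMod.val_lt _) (ZMod.val_lt _) (ZMod.val_lt _)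
  rw [← ZMod.natCast_eq_zero_iff]
  push_cast
  rw [ZMod.natCast_zmod_val, ZMod.natCast_zmod_val, ZMod.natCast_zmod_val]
  exact hsum

theorem Lw (m : ℕ) (hm : 3 < m) :
    Lf m (fun q : Fin 3 × Fin (m - 1) =>
      if (q.1 = 0 ∧ ((q.2 : ℕ) = 0 ∨ (q.2 : ℕ) = m - 2)) ∨
          (q.1 = 1 ∧ (q.2 : ℕ) = 1) ∨ (q.1 = 2 ∧ (q.2 : ℕ) = m - 3)
        then 1 else 0) = -2 := by
  rw [Lf, Fintype.sum_prod_type, Fin.sum_univ_three]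
  norm_num [show ¬((0:Fin 3) = 2) by decide, show ¬((1:Fin 3) = 2) by decide,
    show ¬((2:Fin 3) = 0) by decide, show ¬((2:Fin 3) = 1) by decide]
  have H1 : (∑ x : Fin (m - 1), if (x : ℕ) = 0 ∨ (x : ℕ) = m - 2 then pen m (0, x) else 0)
      = -2 := by
    have step : ∀ j : Fin (m - 1),
        (if (j : ℕ) = 0 ∨ (j : ℕ) = m - 2 then pen m (0, j) else 0)
        = (if j = (⟨0, by omega⟩ : Fin (m - 1)) then -1 else 0)
          + (if j = (⟨m - 2, by omega⟩ : Fin (m - 1)) then -1 else 0) := by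
      intro j
      have hj := j.isLt
      have hpen : pen m (0, j) = pe0 m ((j : ℕ) + 1) := rfl
      simp only [hpen, pe0, Fin.ext_iff, Fin.val_mk]
      split_ifs <;> first | exact ‹False›.elim | omega
    rw [Finset.sum_congr rfl (fun j _ => step j), Finset.sum_add_distrib,
      Finset.sum_ite_eq' Finset.univ, Finset.sum_ite_eq' Finset.univ]
    simp
  have H2 : (∑ x : Fin (m - 1), if (x : ℕ) = 1 then pen m (1, x) else 0) = 0 := by
    apply Finset.sum_eq_zero
    intro j _
    split_ifs with h
    · have hpen : pen m (1, j) = pe1 ((j : ℕ) + 1) := rfl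
      rw [hpen, h]
      norm_num [pe1]
    · rfl
  have H3 : (∑ x : Fin (m - 1), if (x : ℕ) = m - 3 then pen m (2, x) else 0) = 0 := by
    apply Finset.sum_eq_zero
    intro j _
    split_ifs with h
    · have hpen : pen m (2, j) = pe2 m ((j : ℕ) + 1) := rfl
      rw [hpen, h, show m - 3 + 1 = m - 2 by omega]
      norm_num [pe2]
    · rfl
  rw [H1, H2, H3]
  norm_num

end Aux


open BZsetup in
/-- For `m > 3` the inclusion `R^{pr}_{0,3}(ℤ/mℤ) ⊆ pr(BZ(SL_m(ℂ)))` is strict: the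
vector `(1,0,…,0,1; 0,1,0,…,0; 0,…,0,1,0) ∈ ℤ^{3(m−1)}` (i.e. `λ = ω₁ + ω_{m−1}`,
`μ = ω₂`, `ν = ω_{m−2}`) is the boundary projection of an explicit BZ triangle, but
does not lie in the semigroup `R^{pr}_{0,3}(ℤ/mℤ)` generated by the `m²` vertices of
`P_{0,3}(ℤ/mℤ)`. -/
theorem stmt16 (m : ℕ) (hm : 3 < m) :
    let w : Fin 3 × Fin (m - 1) → ℤ := fun q =>
      if (q.1 = 0 ∧ ((q.2 : ℕ) = 0 ∨ (q.2 : ℕ) = m - 2)) ∨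
          (q.1 = 1 ∧ (q.2 : ℕ) = 1) ∨ (q.1 = 2 ∧ (q.2 : ℕ) = m - 3)
        then 1 else 0
    (∃ x ∈ BZ m, pr m x = w) ∧ w ∉ AddSubmonoid.closure (vtx m) := by
  intro w
  constructor
  · exact ⟨myx m, myx_mem m hm, myx_pr m hm⟩
  · intro hmem
    have hnn : 0 ≤ Lf m w := by
      refine AddSubmonoid.closure_induction
        (motive := fun v _ => 0 ≤ Lf m v)
        (fun v hv => gen_nonneg m hm v hv)
        (by simpa using (Lf_zero m).ge)
        (fun v u _ _ hv hu => by
          show 0 ≤ Lf m (v + u)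
          rw [Lf_add]
          exact add_nonneg hv hu)
        hmem
    have hL : Lf m w = -2 := Lw m hm
    omega
end

section
/- The toric ideal of the semigroup R_{0,3}(Z/3Z) (generated in degree 1 by the 9 vertices of P_{0,3}(Z/3Z) lifted to height 1) is generated by the two cubic binomials XYZ − P_{12}P_{23}P_{31} and XYZ − P_{21}P_{32}P_{13} in the polynomial ring C[X, Y, Z, P_{12}, P_{23}, P_{31}, P_{21}, P_{32}, P_{13}], where the variables correspond to the 9 generators of the semigroup. -/
/-- The nine degree-1 generators of the phylogenetic semigroup `R_{0,3}(ℤ/3ℤ)`: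
the lattice points of `P_{0,3}(ℤ/3ℤ)` (coordinates `x^{e_a}_{[1]}, x^{e_a}_{[2]}` for
the three tripod edges, in the order `(e₁,1),(e₁,2),(e₂,1),(e₂,2),(e₃,1),(e₃,2)`)
lifted to height 1 (last coordinate = degree).  In order:
`X ↔ (0,0,0)`, `Y ↔ (1,1,1)`, `Z ↔ (2,2,2)`,
`P₁₂ ↔ (1,2,0)`, `P₂₃ ↔ (0,1,2)`, `P₃₁ ↔ (2,0,1)`,
`P₂₁ ↔ (2,1,0)`, `P₃₂ ↔ (0,2,1)`, `P₁₃ ↔ (1,0,2)`. -/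
def phyloGen : Fin 9 → (Fin 7 → ℤ) :=
  ![![0, 0, 0, 0, 0, 0, 1],
    ![1, 0, 1, 0, 1, 0, 1],
    ![0, 1, 0, 1, 0, 1, 1],
    ![1, 0, 0, 1, 0, 0, 1],
    ![0, 0, 1, 0, 0, 1, 1],
    ![0, 1, 0, 0, 1, 0, 1],
    ![0, 1, 1, 0, 0, 0, 1],
    ![0, 0, 0, 1, 1, 0, 1],
    ![1, 0, 0, 0, 0, 1, 1]]

/-- The monomial map `ℂ[X,Y,Z,P₁₂,P₂₃,P₃₁,P₂₁,P₃₂,P₁₃] → ℂ[R_{0,3}(ℤ/3ℤ)]` sending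
each variable to the corresponding semigroup generator. -/
noncomputable def phyloMap : MvPolynomial (Fin 9) ℂ →ₐ[ℂ] AddMonoidAlgebra ℂ (Fin 7 → ℤ) :=
  MvPolynomial.aeval fun i => AddMonoidAlgebra.single (phyloGen i) 1

open MvPolynomial

noncomputable def sig (a : Fin 9 →₀ ℕ) : Fin 7 → ℤ := ∑ i, (a i : ℤ) • phyloGen i

lemma phyloMap_monomial (a : Fin 9 →₀ ℕ) (c : ℂ) :
    phyloMap (monomial a c) = AddMonoidAlgebra.single (sig a) c := by
  rw [phyloMap, aeval_monomial]
  rw [Finsupp.prod_fintype _ _ (fun i => pow_zero _)]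
  have : ∀ i : Fin 9, (AddMonoidAlgebra.single (phyloGen i) (1:ℂ)) ^ (a i)
      = AddMonoidAlgebra.single ((a i : ℤ) • phyloGen i) 1 := by
    intro i
    rw [AddMonoidAlgebra.single_pow, one_pow]
    norm_cast
  simp_rw [this]
  rw [AddMonoidAlgebra.prod_single]
  rw [Finset.prod_const_one, sig]
  have : (algebraMap ℂ (AddMonoidAlgebra ℂ (Fin 7 → ℤ))) c = AddMonoidAlgebra.single 0 c := rfl
  rw [this, AddMonoidAlgebra.single_mul_single, zero_add, mul_one]

/-- normal exponent vectors -/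
def pNormal (a : Fin 9 →₀ ℕ) : Prop :=
  (a 3 = 0 ∨ a 4 = 0 ∨ a 5 = 0) ∧ (a 6 = 0 ∨ a 7 = 0 ∨ a 8 = 0)

lemma sum_univ_nine' {M : Type*} [AddCommMonoid M] (f : Fin 9 → M) :
    ∑ i, f i = f 0 + f 1 + f 2 + f 3 + f 4 + f 5 + f 6 + f 7 + f 8 := by
  rw [Fin.sum_univ_castSucc, Fin.sum_univ_eight]
  rfl

lemma sigA0 (a : Fin 9 →₀ ℕ) : sig a 0 = (a 1 : ℤ) + (a 3 : ℤ) + (a 8 : ℤ) := by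
  rw [sig, sum_univ_nine']
  simp only [Pi.add_apply, Pi.smul_apply, smul_eq_mul,
    show phyloGen 0 0 = 0 from by decide, show phyloGen 1 0 = 1 from by decide, show phyloGen 2 0 = 0 from by decide, show phyloGen 3 0 = 1 from by decide, show phyloGen 4 0 = 0 from by decide, show phyloGen 5 0 = 0 from by decide, show phyloGen 6 0 = 0 from by decide, show phyloGen 7 0 = 0 from by decide, show phyloGen 8 0 = 1 from by decide]
  ring

lemma sigA1 (a : Fin 9 →₀ ℕ) : sig a 1 = (a 2 : ℤ) + (a 5 : ℤ) + (a 6 : ℤ) := by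
  rw [sig, sum_univ_nine']
  simp only [Pi.add_apply, Pi.smul_apply, smul_eq_mul,
    show phyloGen 0 1 = 0 from by decide, show phyloGen 1 1 = 0 from by decide, show phyloGen 2 1 = 1 from by decide, show phyloGen 3 1 = 0 from by decide, show phyloGen 4 1 = 0 from by decide, show phyloGen 5 1 = 1 from by decide, show phyloGen 6 1 = 1 from by decide, show phyloGen 7 1 = 0 from by decide, show phyloGen 8 1 = 0 from by decide]
  ring

lemma sigA2 (a : Fin 9 →₀ ℕ) : sig a 2 = (a 1 : ℤ) + (a 4 : ℤ) + (a 6 : ℤ) := by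
  rw [sig, sum_univ_nine']
  simp only [Pi.add_apply, Pi.smul_apply, smul_eq_mul,
    show phyloGen 0 2 = 0 from by decide, show phyloGen 1 2 = 1 from by decide, show phyloGen 2 2 = 0 from by decide, show phyloGen 3 2 = 0 from by decide, show phyloGen 4 2 = 1 from by decide, show phyloGen 5 2 = 0 from by decide, show phyloGen 6 2 = 1 from by decide, show phyloGen 7 2 = 0 from by decide, show phyloGen 8 2 = 0 from by decide]
  ring

lemma sigA3 (a : Fin 9 →₀ ℕ) : sig a 3 = (a 2 : ℤ) + (a 3 : ℤ) + (a 7 : ℤ) := by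
  rw [sig, sum_univ_nine']
  simp only [Pi.add_apply, Pi.smul_apply, smul_eq_mul,
    show phyloGen 0 3 = 0 from by decide, show phyloGen 1 3 = 0 from by decide, show phyloGen 2 3 = 1 from by decide, show phyloGen 3 3 = 1 from by decide, show phyloGen 4 3 = 0 from by decide, show phyloGen 5 3 = 0 from by decide, show phyloGen 6 3 = 0 from by decide, show phyloGen 7 3 = 1 from by decide, show phyloGen 8 3 = 0 from by decide]
  ring

lemma sigA4 (a : Fin 9 →₀ ℕ) : sig a 4 = (a 1 : ℤ) + (a 5 : ℤ) + (a 7 : ℤ) := by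
  rw [sig, sum_univ_nine']
  simp only [Pi.add_apply, Pi.smul_apply, smul_eq_mul,
    show phyloGen 0 4 = 0 from by decide, show phyloGen 1 4 = 1 from by decide, show phyloGen 2 4 = 0 from by decide, show phyloGen 3 4 = 0 from by decide, show phyloGen 4 4 = 0 from by decide, show phyloGen 5 4 = 1 from by decide, show phyloGen 6 4 = 0 from by decide, show phyloGen 7 4 = 1 from by decide, show phyloGen 8 4 = 0 from by decide]
  ring

lemma sigA5 (a : Fin 9 →₀ ℕ) : sig a 5 = (a 2 : ℤ) + (a 4 : ℤ) + (a 8 : ℤ) := by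
  rw [sig, sum_univ_nine']
  simp only [Pi.add_apply, Pi.smul_apply, smul_eq_mul,
    show phyloGen 0 5 = 0 from by decide, show phyloGen 1 5 = 0 from by decide, show phyloGen 2 5 = 1 from by decide, show phyloGen 3 5 = 0 from by decide, show phyloGen 4 5 = 1 from by decide, show phyloGen 5 5 = 0 from by decide, show phyloGen 6 5 = 0 from by decide, show phyloGen 7 5 = 0 from by decide, show phyloGen 8 5 = 1 from by decide]
  ring

lemma sigA6 (a : Fin 9 →₀ ℕ) : sig a 6 = (a 0 : ℤ) + (a 1 : ℤ) + (a 2 : ℤ) + (a 3 : ℤ) + (a 4 : ℤ) + (a 5 : ℤ) + (a 6 : ℤ) + (a 7 : ℤ) + (a 8 : ℤ) := by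
  rw [sig, sum_univ_nine']
  simp only [Pi.add_apply, Pi.smul_apply, smul_eq_mul,
    show phyloGen 0 6 = 1 from by decide, show phyloGen 1 6 = 1 from by decide, show phyloGen 2 6 = 1 from by decide, show phyloGen 3 6 = 1 from by decide, show phyloGen 4 6 = 1 from by decide, show phyloGen 5 6 = 1 from by decide, show phyloGen 6 6 = 1 from by decide, show phyloGen 7 6 = 1 from by decide, show phyloGen 8 6 = 1 from by decide]
  ring

lemma sig_inj (a b : Fin 9 →₀ ℕ) (ha : pNormal a) (hb : pNormal b)
    (h : sig a = sig b) : a = b := by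
  obtain ⟨ha1, ha2⟩ := ha
  obtain ⟨hb1, hb2⟩ := hb
  have e0 := congr_fun h 0; have e1 := congr_fun h 1; have e2 := congr_fun h 2
  have e3 := congr_fun h 3; have e4 := congr_fun h 4; have e5 := congr_fun h 5
  have e6 := congr_fun h 6
  rw [sigA0, sigA0] at e0
  rw [sigA1, sigA1] at e1
  rw [sigA2, sigA2] at e2
  rw [sigA3, sigA3] at e3
  rw [sigA4, sigA4] at e4
  rw [sigA5, sigA5] at e5
  rw [sigA6, sigA6] at e6
  clear h

  have k1 : (a 4:ℤ) - b 4 = (a 3:ℤ) - b 3 := by clear ha1 ha2 hb1 hb2; omega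
  have k2 : (a 5:ℤ) - b 5 = (a 3:ℤ) - b 3 := by clear ha1 ha2 hb1 hb2; omega
  have k3 : (a 7:ℤ) - b 7 = (a 6:ℤ) - b 6 := by clear ha1 ha2 hb1 hb2; omega
  have k4 : (a 8:ℤ) - b 8 = (a 6:ℤ) - b 6 := by clear ha1 ha2 hb1 hb2; omega
  have k5 : (a 0:ℤ) - b 0 = ((b 3:ℤ) - a 3) + ((b 6:ℤ) - a 6) := by
    clear ha1 ha2 hb1 hb2; omega
  have k6 : (a 1:ℤ) - b 1 = ((b 3:ℤ) - a 3) + ((b 6:ℤ) - a 6) := by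
    clear ha1 ha2 hb1 hb2; omega
  have k7 : (a 2:ℤ) - b 2 = ((b 3:ℤ) - a 3) + ((b 6:ℤ) - a 6) := by
    clear ha1 ha2 hb1 hb2; omega
  have m0 : a 3 = b 3 := by clear ha2 hb2 e0 e1 e2 e3 e4 e5 e6 k3 k4 k5 k6 k7; omega
  have n0 : a 6 = b 6 := by clear ha1 hb1 e0 e1 e2 e3 e4 e5 e6 k1 k2 k5 k6 k7; omega
  have q : a 0 = b 0 ∧ a 1 = b 1 ∧ a 2 = b 2 ∧ a 3 = b 3 ∧ a 4 = b 4 ∧ a 5 = b 5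
      ∧ a 6 = b 6 ∧ a 7 = b 7 ∧ a 8 = b 8 := by
    clear ha1 ha2 hb1 hb2; omega
  obtain ⟨q0,q1,q2,q3,q4,q5,q6,q7,q8⟩ := q
  refine Finsupp.ext fun i => ?_
  fin_cases i <;> assumption

noncomputable def I9 : Ideal (MvPolynomial (Fin 9) ℂ) :=
  Ideal.span {X 0 * X 1 * X 2 - X 3 * X 4 * X 5, X 0 * X 1 * X 2 - X 6 * X 7 * X 8}

noncomputable def s012 : Fin 9 →₀ ℕ := Finsupp.single 0 1 + Finsupp.single 1 1 + Finsupp.single 2 1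
noncomputable def s345 : Fin 9 →₀ ℕ := Finsupp.single 3 1 + Finsupp.single 4 1 + Finsupp.single 5 1
noncomputable def s678 : Fin 9 →₀ ℕ := Finsupp.single 6 1 + Finsupp.single 7 1 + Finsupp.single 8 1

lemma X_prod_012 : (X 0 * X 1 * X 2 : MvPolynomial (Fin 9) ℂ) = monomial s012 1 := by
  rw [s012]
  rw [X, X, X, monomial_mul, monomial_mul, one_mul, one_mul]

lemma X_prod_345 : (X 3 * X 4 * X 5 : MvPolynomial (Fin 9) ℂ) = monomial s345 1 := by
  rw [s345]
  rw [X, X, X, monomial_mul, monomial_mul, one_mul, one_mul]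

lemma X_prod_678 : (X 6 * X 7 * X 8 : MvPolynomial (Fin 9) ℂ) = monomial s678 1 := by
  rw [s678]
  rw [X, X, X, monomial_mul, monomial_mul, one_mul, one_mul]

lemma gen1_mem : (monomial s345 (1:ℂ) - monomial s012 1) ∈ I9 := by
  have : monomial s345 (1:ℂ) - monomial s012 1
      = -(X 0 * X 1 * X 2 - X 3 * X 4 * X 5) := by
    rw [X_prod_012, X_prod_345]; ring
  rw [this]
  exact neg_mem (Ideal.subset_span (Set.mem_insert _ _))

lemma gen2_mem : (monomial s678 (1:ℂ) - monomial s012 1) ∈ I9 := by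
  have : monomial s678 (1:ℂ) - monomial s012 1
      = -(X 0 * X 1 * X 2 - X 6 * X 7 * X 8) := by
    rw [X_prod_012, X_prod_678]; ring
  rw [this]
  exact neg_mem (Ideal.subset_span (Set.mem_insert_of_mem _ rfl))

lemma mem_step {s t : Fin 9 →₀ ℕ} (hst : (monomial s (1:ℂ) - monomial t 1) ∈ I9) :
    ∀ (m : ℕ) (b : Fin 9 →₀ ℕ),
      (monomial (b + m • s) (1:ℂ) - monomial (b + m • t) 1) ∈ I9 := by
  intro m
  induction m with
  | zero => intro b; simp
  | succ m ih =>
    intro b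
    have key : monomial (b + (m+1) • s) (1:ℂ) - monomial (b + (m+1) • t) 1
        = monomial (b + m • s) 1 * (monomial s 1 - monomial t 1)
          + (monomial ((b + t) + m • s) 1 - monomial ((b + t) + m • t) 1) := by
      rw [mul_sub, monomial_mul, monomial_mul, mul_one]
      rw [show b + (m+1) • s = b + m • s + s by rw [succ_nsmul]; abel,
          show b + (m+1) • t = (b + t) + m • t by rw [succ_nsmul]; abel,
          show (b + t) + m • s = b + m • s + t by abel]
      ring
    rw [key]
    exact add_mem (Ideal.mul_mem_left _ _ hst) (ih (b + t))

def mA (a : Fin 9 →₀ ℕ) : ℕ := min (a 3) (min (a 4) (a 5))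
def nA (a : Fin 9 →₀ ℕ) : ℕ := min (a 6) (min (a 7) (a 8))
noncomputable def cA (a : Fin 9 →₀ ℕ) : Fin 9 →₀ ℕ := a - (mA a • s345 + nA a • s678)
noncomputable def nfA (a : Fin 9 →₀ ℕ) : Fin 9 →₀ ℕ := cA a + (mA a + nA a) • s012

lemma decompA (a : Fin 9 →₀ ℕ) : a = cA a + mA a • s345 + nA a • s678 := by
  have h3 : mA a ≤ a 3 := min_le_left _ _
  have h4 : mA a ≤ a 4 := le_trans (min_le_right _ _) (min_le_left _ _)
  have h5 : mA a ≤ a 5 := le_trans (min_le_right _ _) (min_le_right _ _)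
  have h6 : nA a ≤ a 6 := min_le_left _ _
  have h7 : nA a ≤ a 7 := le_trans (min_le_right _ _) (min_le_left _ _)
  have h8 : nA a ≤ a 8 := le_trans (min_le_right _ _) (min_le_right _ _)
  refine Finsupp.ext fun i => ?_
  simp only [cA, Finsupp.add_apply, Finsupp.tsub_apply, Finsupp.smul_apply, smul_eq_mul]
  fin_cases i <;>
    simp [s345, s678, Finsupp.single_apply] <;>
    omega

lemma nfA_normal (a : Fin 9 →₀ ℕ) : pNormal (nfA a) := by
  have h3 : mA a ≤ a 3 := min_le_left _ _
  have h4 : mA a ≤ a 4 := le_trans (min_le_right _ _) (min_le_left _ _)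
  have h5 : mA a ≤ a 5 := le_trans (min_le_right _ _) (min_le_right _ _)
  have h6 : nA a ≤ a 6 := min_le_left _ _
  have h7 : nA a ≤ a 7 := le_trans (min_le_right _ _) (min_le_left _ _)
  have h8 : nA a ≤ a 8 := le_trans (min_le_right _ _) (min_le_right _ _)
  have hm : mA a = a 3 ∨ mA a = a 4 ∨ mA a = a 5 := by
    unfold mA; omega
  have hn : nA a = a 6 ∨ nA a = a 7 ∨ nA a = a 8 := by
    unfold nA; omega
  have v3 : (nfA a) 3 = a 3 - mA a := by
    simp [nfA, cA, s012, s345, s678, Finsupp.single_apply, Finsupp.tsub_apply]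
  have v4 : (nfA a) 4 = a 4 - mA a := by
    simp [nfA, cA, s012, s345, s678, Finsupp.single_apply, Finsupp.tsub_apply]
  have v5 : (nfA a) 5 = a 5 - mA a := by
    simp [nfA, cA, s012, s345, s678, Finsupp.single_apply, Finsupp.tsub_apply]
  have v6 : (nfA a) 6 = a 6 - nA a := by
    simp [nfA, cA, s012, s345, s678, Finsupp.single_apply, Finsupp.tsub_apply]
  have v7 : (nfA a) 7 = a 7 - nA a := by
    simp [nfA, cA, s012, s345, s678, Finsupp.single_apply, Finsupp.tsub_apply]
  have v8 : (nfA a) 8 = a 8 - nA a := by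
    simp [nfA, cA, s012, s345, s678, Finsupp.single_apply, Finsupp.tsub_apply]
  constructor
  · rw [v3, v4, v5]; omega
  · rw [v6, v7, v8]; omega

lemma nfA_mem (a : Fin 9 →₀ ℕ) :
    (monomial a (1:ℂ) - monomial (nfA a) 1) ∈ I9 := by
  have h1 := mem_step gen1_mem (mA a) (cA a + nA a • s678)
  have h2 := mem_step gen2_mem (nA a) (cA a + mA a • s012)
  rw [show cA a + nA a • s678 + mA a • s345 = a by
        conv_rhs => rw [decompA a]
        abel,
      show cA a + nA a • s678 + mA a • s012 = cA a + mA a • s012 + nA a • s678 by abel] at h1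
  rw [show cA a + mA a • s012 + nA a • s012 = nfA a by rw [nfA, add_nsmul]; abel] at h2
  have := add_mem h1 h2
  rwa [sub_add_sub_cancel] at this

lemma normal_ker (g : MvPolynomial (Fin 9) ℂ) (hg : ∀ a ∈ g.support, pNormal a)
    (h : phyloMap g = 0) : g = 0 := by
  have hrep : phyloMap g = ∑ a ∈ g.support, AddMonoidAlgebra.single (sig a) (coeff a g) := by
    conv_lhs => rw [g.as_sum]
    rw [map_sum]
    exact Finset.sum_congr rfl fun a _ => phyloMap_monomial a _
  by_contra hne
  obtain ⟨a, ha⟩ := MvPolynomial.support_nonempty.2 hne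
  have h0 : ∑ b ∈ g.support, (AddMonoidAlgebra.single (sig b) (coeff b g)).coeff (sig a) = 0 := by
    rw [← Finsupp.finset_sum_apply, ← AddMonoidAlgebra.coeff_sum, ← hrep, h]
    rfl
  have hz : ∀ b ∈ g.support, b ≠ a →
      (AddMonoidAlgebra.single (sig b) (coeff b g)).coeff (sig a) = 0 := by
    intro b hb hba
    rw [AddMonoidAlgebra.coeff_single, Finsupp.single_apply, if_neg]
    intro hsig
    exact hba (sig_inj b a (hg b hb) (hg a ha) hsig)
  have h1 := (Finset.sum_eq_single_of_mem a ha hz).symm.trans h0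
  rw [AddMonoidAlgebra.coeff_single, Finsupp.single_eq_same] at h1
  exact (MvPolynomial.mem_support_iff.1 ha) h1

lemma I9_le_ker :
    I9 ≤ RingHom.ker (phyloMap : MvPolynomial (Fin 9) ℂ →+* AddMonoidAlgebra ℂ (Fin 7 → ℤ)) := by
  rw [I9, Ideal.span_le]
  rintro p hp
  simp only [Set.mem_insert_iff, Set.mem_singleton_iff] at hp
  rcases hp with rfl | rfl <;>
  · rw [SetLike.mem_coe, RingHom.mem_ker]
    show phyloMap _ = 0
    rw [map_sub, sub_eq_zero]
    simp only [map_mul, phyloMap, MvPolynomial.aeval_X, AddMonoidAlgebra.single_mul_single,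
      one_mul]
    congr 1
    funext j
    fin_cases j <;> decide


open MvPolynomial in
/-- The toric ideal of `R_{0,3}(ℤ/3ℤ)` is generated by the two cubic binomials
`XYZ − P₁₂P₂₃P₃₁` and `XYZ − P₂₁P₃₂P₁₃`. -/
theorem stmt18 :
    RingHom.ker (phyloMap : MvPolynomial (Fin 9) ℂ →+* AddMonoidAlgebra ℂ (Fin 7 → ℤ))
      = Ideal.span {X 0 * X 1 * X 2 - X 3 * X 4 * X 5,
                    X 0 * X 1 * X 2 - X 6 * X 7 * X 8} := by
  refine le_antisymm ?_ I9_le_ker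
  intro f hf
  rw [RingHom.mem_ker] at hf
  set N : MvPolynomial (Fin 9) ℂ := ∑ a ∈ f.support, monomial (nfA a) (coeff a f) with hN
  have hfN : f - N ∈ I9 := by
    have hrw : f - N = ∑ a ∈ f.support,
        (monomial a (coeff a f) - monomial (nfA a) (coeff a f)) := by
      conv_lhs => rw [f.as_sum]
      rw [hN, ← Finset.sum_sub_distrib]
    rw [hrw]
    refine Ideal.sum_mem _ fun a _ => ?_
    have : monomial a (coeff a f) - monomial (nfA a) (coeff a f)
        = C (coeff a f) * (monomial a 1 - monomial (nfA a) 1) := by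
      rw [mul_sub, C_mul_monomial, C_mul_monomial, mul_one]
    rw [this]
    exact Ideal.mul_mem_left _ _ (nfA_mem a)
  have hNker : phyloMap N = 0 := by
    have h2 : phyloMap (f - N) = 0 := I9_le_ker hfN
    have h3 : phyloMap f = 0 := hf
    rw [map_sub, h3, zero_sub, neg_eq_zero] at h2
    exact h2
  have hN0 : N = 0 := by
    refine normal_ker N (fun b hb => ?_) hNker
    have hb' := MvPolynomial.support_sum hb
    obtain ⟨a, -, hmem⟩ := Finset.mem_biUnion.1 hb'
    rw [MvPolynomial.support_monomial] at hmem
    split_ifs at hmem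
    · simp at hmem
    · rw [Finset.mem_singleton] at hmem
      subst hmem
      exact nfA_normal a
  have : f ∈ I9 := by
    rw [show f = f - N by rw [hN0, sub_zero]]
    exact hfN
  exact this
end

section
/- Let Γ be a connected graph with first Betti number g and n leaves, m ≥ 2. The number of degree-one elements of the phylogenetic semigroup R_Γ(Z/mZ) (labelings of the edges of the split forest Γ̂ by elements of Z/mZ with the local zero-sum condition at each internal vertex and dual labels on split edge pairs) equals m^{g + n − 1} when Γ is trivalent. -/
namespace Stmt19Aux

open Finset

variable {m : ℕ} {V : Type} [Fintype V] [DecidableEq V] (G : SimpleGraph V) [DecidableRel G.Adj]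

/-- The group of antisymmetric labelings supported on adjacent pairs. -/
def A : AddSubgroup (V → V → ZMod m) where
  carrier := {ℓ | (∀ v u, ¬ G.Adj v u → ℓ v u = 0) ∧ (∀ v u, ℓ v u = - ℓ u v)}
  zero_mem' := ⟨fun _ _ _ => rfl, fun _ _ => by simp⟩
  add_mem' := by
    rintro a b ⟨ha1, ha2⟩ ⟨hb1, hb2⟩
    refine ⟨fun v u h => ?_, fun v u => ?_⟩
    · simp only [Pi.add_apply, ha1 v u h, hb1 v u h, add_zero]
    · simp only [Pi.add_apply, neg_add]
      rw [ha2 v u, hb2 v u]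
  neg_mem' := by
    rintro a ⟨ha1, ha2⟩
    refine ⟨fun v u h => ?_, fun v u => ?_⟩
    · simp only [Pi.neg_apply, ha1 v u h, neg_zero]
    · simp only [Pi.neg_apply]
      rw [ha2 v u]

lemma mem_A_iff {ℓ : V → V → ZMod m} :
    ℓ ∈ A (m := m) G ↔
      (∀ v u, ¬ G.Adj v u → ℓ v u = 0) ∧ (∀ v u, ℓ v u = - ℓ u v) := Iff.rfl

/-- Divergence of a labeling at a vertex. -/
def dv (ℓ : V → V → ZMod m) (v : V) : ZMod m := ∑ u ∈ G.neighborFinset v, ℓ v u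

/-- The divergence homomorphism restricted to internal (degree-3) vertices. -/
def φ : A (m := m) G →+ ({v : V // G.degree v = 3} → ZMod m) where
  toFun ℓ v := dv G ℓ.1 v.1
  map_zero' := by funext v; simp [dv]
  map_add' a b := by funext v; simp [dv, Finset.sum_add_distrib]

/-- Unit flow along one oriented edge. -/
def step (a c : V) : V → V → ZMod m := fun v u =>
  if v = a ∧ u = c then 1 else if v = c ∧ u = a then -1 else 0

lemma step_mem {a c : V} (h : G.Adj a c) : step (m := m) a c ∈ A G := by
  rw [mem_A_iff]
  constructor
  · intro v u hvu
    have h1 : ¬ (v = a ∧ u = c) := fun ⟨hv, hu⟩ => hvu (hv ▸ hu ▸ h)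
    have h2 : ¬ (v = c ∧ u = a) := fun ⟨hv, hu⟩ => hvu (hv ▸ hu ▸ h.symm)
    simp [step, h1, h2]
  · intro v u
    have hac : a ≠ c := h.ne
    by_cases h1 : v = a ∧ u = c
    · obtain ⟨rfl, rfl⟩ := h1
      simp [step, hac, Ne.symm hac]
    · by_cases h2 : v = c ∧ u = a
      · obtain ⟨rfl, rfl⟩ := h2
        simp [step, hac, Ne.symm hac]
      · have h1' : ¬ (u = c ∧ v = a) := fun ⟨x, y⟩ => h1 ⟨y, x⟩
        have h2' : ¬ (u = a ∧ v = c) := fun ⟨x, y⟩ => h2 ⟨y, x⟩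
        simp [step, h1, h2, h1', h2']

lemma dv_step {a c : V} (h : G.Adj a c) (v : V) :
    dv G (step (m := m) a c) v
      = (if v = a then 1 else 0) - (if v = c then 1 else 0) := by
  have hac : a ≠ c := h.ne
  unfold dv
  by_cases hva : v = a
  · subst hva
    have hsum : ∀ u ∈ G.neighborFinset v, step (m := m) v c v u
        = if u = c then (1 : ZMod m) else 0 := by
      intro u _
      simp [step, hac]
    rw [Finset.sum_congr rfl hsum, Finset.sum_ite_eq' _ c (fun _ => (1 : ZMod m))]
    simp [SimpleGraph.mem_neighborFinset, h, hac]
  · by_cases hvc : v = c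
    · subst hvc
      have hsum : ∀ u ∈ G.neighborFinset v, step (m := m) a v v u
          = if u = a then (-1 : ZMod m) else 0 := by
        intro u _
        simp [step, Ne.symm hac]
      rw [Finset.sum_congr rfl hsum, Finset.sum_ite_eq' _ a (fun _ => (-1 : ZMod m))]
      simp [SimpleGraph.mem_neighborFinset, h.symm, hva]
    · have hsum : ∀ u ∈ G.neighborFinset v, step (m := m) a c v u = 0 := by
        intro u _
        simp [step, hva, hvc]
      rw [Finset.sum_congr rfl hsum]
      simp [hva, hvc]

/-- Unit flow along a walk. -/
def wflow : {a b : V} → G.Walk a b → (V → V → ZMod m)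
  | _, _, SimpleGraph.Walk.nil => 0
  | _, _, SimpleGraph.Walk.cons (u := a) (v := c) _ p => step a c + wflow p

lemma wflow_mem {a b : V} (p : G.Walk a b) : wflow (m := m) G p ∈ A G := by
  induction p with
  | nil => exact (A G).zero_mem
  | cons h p ih => exact (A G).add_mem (step_mem G h) ih

lemma dv_wflow {a b : V} (p : G.Walk a b) (v : V) :
    dv G (wflow (m := m) G p) v
      = (if v = a then 1 else 0) - (if v = b then 1 else 0) := by
  induction p with
  | nil => simp [wflow, dv]
  | @cons a c b h p ih =>
      have hadd : dv G (wflow (m := m) G (SimpleGraph.Walk.cons h p)) v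
          = dv G (step (m := m) a c) v + dv G (wflow (m := m) G p) v := by
        simp [wflow, dv, Finset.sum_add_distrib]
      rw [hadd, dv_step G h, ih]
      ring

lemma phi_surjective [NeZero m] (hconn : G.Connected)
    (hleaf : ∃ u : V, G.degree u = 1) :
    Function.Surjective (φ (m := m) G) := by
  obtain ⟨u, hu⟩ := hleaf
  have key : ∀ w : {v : V // G.degree v = 3},
      Pi.single w (1 : ZMod m) ∈ (φ (m := m) G).range := by
    intro w
    obtain ⟨p⟩ := hconn.preconnected w.1 u
    refine ⟨⟨wflow (m := m) G p, wflow_mem G p⟩, ?_⟩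
    funext v
    have hvu : v.1 ≠ u := by
      intro h
      have h2 := v.2
      rw [h, hu] at h2
      exact absurd h2 (by omega)
    show dv G (wflow (m := m) G p) v.1 = _
    rw [dv_wflow G p, Pi.single_apply]
    simp [hvu, Subtype.ext_iff]
  intro f
  have hf : f ∈ (φ (m := m) G).range := by
    rw [← Finset.univ_sum_single f]
    refine AddSubgroup.sum_mem _ (fun w _ => ?_)
    have hval : (((f w).val : ℕ) : ZMod m) = f w := ZMod.natCast_rightInverse (f w)
    have hsingle : Pi.single w (f w)
        = (f w).val • (Pi.single w 1 : {v : V // G.degree v = 3} → ZMod m) := by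
      funext v
      by_cases hv : v = w <;>
        simp [Pi.single_apply, hv, nsmul_eq_mul, hval]
    rw [hsingle]
    exact AddSubgroup.nsmul_mem _ (key w) _
  exact hf

/-- The antisymmetric labelings are parametrized by one value per edge. -/
noncomputable def eqA [LinearOrder V] :
    (A (m := m) G) ≃ ({p : V × V // p.1 < p.2 ∧ G.Adj p.1 p.2} → ZMod m) where
  toFun ℓ p := (ℓ : V → V → ZMod m) p.1.1 p.1.2
  invFun f := ⟨fun v u =>
      if h : v < u ∧ G.Adj v u then f ⟨(v, u), h⟩
      else if h' : u < v ∧ G.Adj u v then - f ⟨(u, v), h'⟩ else 0, by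
    rw [mem_A_iff]
    constructor
    · intro v u hvu
      have h1 : ¬ (v < u ∧ G.Adj v u) := fun h => hvu h.2
      have h2 : ¬ (u < v ∧ G.Adj u v) := fun h => hvu h.2.symm
      rw [dif_neg h1, dif_neg h2]
    · intro v u
      by_cases h1 : v < u ∧ G.Adj v u
      · rw [dif_pos h1, dif_neg (fun h => asymm h1.1 h.1), dif_pos h1, neg_neg]
      · by_cases h2 : u < v ∧ G.Adj u v
        · rw [dif_neg h1, dif_pos h2, dif_pos h2]
        · rw [dif_neg h1, dif_neg h2, dif_neg h2, dif_neg h1, neg_zero]⟩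
  left_inv := by
    intro ℓ
    obtain ⟨h0, hA⟩ := (mem_A_iff G).mp ℓ.2
    apply Subtype.ext
    funext v u
    show (if h : v < u ∧ G.Adj v u then (ℓ : V → V → ZMod m) v u
      else if h' : u < v ∧ G.Adj u v then - (ℓ : V → V → ZMod m) u v else 0)
        = (ℓ : V → V → ZMod m) v u
    by_cases h1 : v < u ∧ G.Adj v u
    · rw [dif_pos h1]
    · by_cases h2 : u < v ∧ G.Adj u v
      · rw [dif_neg h1, dif_pos h2]
        exact (hA v u).symm
      · have hna : ¬ G.Adj v u := by
          intro ha
          rcases lt_trichotomy v u with h | h | h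
          · exact h1 ⟨h, ha⟩
          · exact G.irrefl (h ▸ ha)
          · exact h2 ⟨h, ha.symm⟩
        rw [dif_neg h1, dif_neg h2, h0 v u hna]
  right_inv := by
    intro f
    funext p
    obtain ⟨⟨v, u⟩, hp⟩ := p
    show (if h : v < u ∧ G.Adj v u then f ⟨(v, u), h⟩
      else if h' : u < v ∧ G.Adj u v then - f ⟨(u, v), h'⟩ else 0) = f ⟨(v, u), hp⟩
    rw [dif_pos hp]

lemma card_pairs [LinearOrder V] :
    Nat.card {p : V × V // p.1 < p.2 ∧ G.Adj p.1 p.2} = G.edgeFinset.card := by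
  classical
  rw [Nat.card_eq_fintype_card, Fintype.card_subtype]
  refine Finset.card_bij (fun p _ => s(p.1, p.2)) ?_ ?_ ?_
  · intro p hp
    rw [Finset.mem_filter] at hp
    rw [SimpleGraph.mem_edgeFinset]
    exact hp.2.2
  · intro p hp q hq h
    rw [Finset.mem_filter] at hp hq
    have := Sym2.eq_iff.mp h
    rcases this with ⟨h1, h2⟩ | ⟨h1, h2⟩
    · exact Prod.ext h1 h2
    · exfalso
      have := hp.2.1
      rw [h1, h2] at this
      exact absurd hq.2.1 (asymm this)
  · intro e he
    induction e using Sym2.ind with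
    | _ x y =>
      have hadj : G.Adj x y := by rwa [SimpleGraph.mem_edgeFinset, SimpleGraph.mem_edgeSet] at he
      rcases lt_or_gt_of_ne hadj.ne with hlt | hgt
      · exact ⟨(x, y), Finset.mem_filter.mpr ⟨Finset.mem_univ _, hlt, hadj⟩, rfl⟩
      · exact ⟨(y, x), Finset.mem_filter.mpr ⟨Finset.mem_univ _, hgt, hadj.symm⟩, Sym2.eq_swap⟩

lemma card_A [LinearOrder V] [NeZero m] :
    Nat.card (A (m := m) G) = m ^ G.edgeFinset.card := by
  rw [Nat.card_congr (eqA (m := m) G), Nat.card_fun, Nat.card_zmod, card_pairs]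

end Stmt19Aux

/-- For a connected trivalent graph `Γ` (every vertex of degree 1 or 3) with first
Betti number `g` (`|E| + 1 = |V| + g`) and `n ≥ 1` leaves, and `m ≥ 2`, the number of
degree-one elements of the phylogenetic semigroup `R_Γ(ℤ/mℤ)` — labelings of the
half-edges (`ℓ v u` is the label of edge `vu` at `v`, the two halves of a split edge
being negatives of each other) by elements of `ℤ/mℤ` with the local zero-sum
condition at each internal (degree-3) vertex — equals `m^(g + n − 1)`. -/
theorem stmt19 (m g n : ℕ) (hm : 2 ≤ m) (hn : 1 ≤ n)
    (V : Type) [Fintype V] [DecidableEq V] (G : SimpleGraph V) [DecidableRel G.Adj]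
    (hconn : G.Connected)
    (hdeg : ∀ v : V, G.degree v = 1 ∨ G.degree v = 3)
    (hg : G.edgeFinset.card + 1 = Fintype.card V + g)
    (hn' : (Finset.univ.filter fun v : V => G.degree v = 1).card = n) :
    Nat.card {ℓ : V → V → ZMod m //
        (∀ v u, ¬ G.Adj v u → ℓ v u = 0) ∧
        (∀ v u, ℓ v u = - ℓ u v) ∧
        (∀ v, G.degree v = 3 → ∑ u ∈ G.neighborFinset v, ℓ v u = 0)}
      = m ^ (g + n - 1) := by
  classical
  haveI : NeZero m := ⟨by omega⟩
  letI : LinearOrder V := LinearOrder.lift' (Fintype.equivFin V) (Fintype.equivFin V).injective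
  set I : ℕ := (Finset.univ.filter fun v : V => G.degree v = 3).card with hI
  -- the labelings in question form the kernel of the divergence homomorphism
  have e1 : {ℓ : V → V → ZMod m //
        (∀ v u, ¬ G.Adj v u → ℓ v u = 0) ∧
        (∀ v u, ℓ v u = - ℓ u v) ∧
        (∀ v, G.degree v = 3 → ∑ u ∈ G.neighborFinset v, ℓ v u = 0)}
      ≃ (Stmt19Aux.φ (m := m) G).ker := by
    refine
      { toFun := fun x => ⟨⟨x.1, (Stmt19Aux.mem_A_iff G).mpr ⟨x.2.1, x.2.2.1⟩⟩, ?_⟩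
        invFun := fun y => ⟨y.1.1, ((Stmt19Aux.mem_A_iff G).mp y.1.2).1,
          ((Stmt19Aux.mem_A_iff G).mp y.1.2).2,
          fun v hv => congrFun (AddMonoidHom.mem_ker.mp y.2) ⟨v, hv⟩⟩
        left_inv := fun x => rfl
        right_inv := fun y => rfl }
    · refine AddMonoidHom.mem_ker.mpr (funext fun v => ?_)
      exact x.2.2.2 v.1 v.2
  rw [Nat.card_congr e1]
  -- leaf exists
  have hleaf : ∃ u : V, G.degree u = 1 := by
    have : 0 < (Finset.univ.filter fun v : V => G.degree v = 1).card := by omega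
    obtain ⟨u, hu⟩ := Finset.card_pos.mp this
    exact ⟨u, (Finset.mem_filter.mp hu).2⟩
  have hsurj := Stmt19Aux.phi_surjective (m := m) G hconn hleaf
  -- count the quotient by the kernel
  have hquot : Nat.card ((Stmt19Aux.A (m := m) G) ⧸ (Stmt19Aux.φ (m := m) G).ker)
      = m ^ I := by
    rw [Nat.card_congr
      (QuotientAddGroup.quotientKerEquivOfSurjective _ hsurj).toEquiv]
    rw [Nat.card_fun, Nat.card_zmod, Nat.card_eq_fintype_card, Fintype.card_subtype, hI]
  have key : m ^ I * Nat.card (Stmt19Aux.φ (m := m) G).ker = m ^ G.edgeFinset.card := by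
    rw [← hquot, ← Stmt19Aux.card_A (m := m) G]
    exact (AddSubgroup.card_eq_card_quotient_mul_card_addSubgroup _).symm
  -- vertex count
  have hIn : n + I = Fintype.card V := by
    have h3 : I = (Finset.univ.filter fun v : V => ¬ G.degree v = 1).card := by
      rw [hI]
      congr 1
      apply Finset.filter_congr
      intro v _
      rcases hdeg v with h | h <;> simp [h]
    have hsplit := Finset.card_filter_add_card_filter_not
      (s := (Finset.univ : Finset V)) (p := fun v : V => G.degree v = 1)
    rw [hn', Finset.card_univ, ← h3] at hsplit
    exact hsplit
  have hE : G.edgeFinset.card = I + (g + n - 1) := by omega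
  rw [hE, pow_add] at key
  have hpos : 0 < m ^ I := Nat.pow_pos (by omega)
  exact Nat.eq_of_mul_eq_mul_left hpos key
end
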